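/- arXiv:2511.19076 — 6 statements merged into one kernel-verified Lean document; each statement's English description precedes it below -/
import Mathlib

section
/- For every integer n ≥ 1 and every integer k with 0 ≤ k ≤ n−1, the Eulerian number A(n,k) satisfies A(n,k) = Σ_{i=1}^{k+1} (−1)^{k+1−i} · C(n−i, k+1−i) · S(n,i) · i!, where C(a,b) denotes the binomial coefficient. -/
open Finset Function

/-- The number of descents of a permutation `π` of `{0, …, n-1}`:
indices `i` with `i + 1 < n` and `π (i+1) < π i`. -/
noncomputable def descentCount {n : ℕ} (π : Equiv.Perm (Fin n)) : ℕ :=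
  Nat.card {i : Fin n // ∃ h : (i : ℕ) + 1 < n, π ⟨(i : ℕ) + 1, h⟩ < π i}

/-- The Eulerian number `A(n,k)`: the number of permutations of an `n`-element
set with exactly `k` descents. -/
noncomputable def eulerian (n k : ℕ) : ℕ :=
  Nat.card {π : Equiv.Perm (Fin n) // descentCount π = k}

/-- The Stirling number of the second kind `S(n,i)`: the number of partitions of
an `n`-element set into `i` nonempty (unordered) blocks. -/
noncomputable def stirling (n i : ℕ) : ℕ :=
  Nat.card {P : Finpartition (Finset.univ : Finset (Fin n)) // P.parts.card = i}

namespace EulerianAux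

variable {n i : ℕ}

open Classical in
/-- The descent set of a permutation. -/
noncomputable def desSet (π : Equiv.Perm (Fin n)) : Finset (Fin n) :=
  univ.filter fun p => ∃ h : (p : ℕ) + 1 < n, π ⟨(p : ℕ) + 1, h⟩ < π p

lemma descentCount_eq (π : Equiv.Perm (Fin n)) : descentCount π = (desSet π).card := by
  classical
  rw [descentCount, Nat.card_eq_fintype_card, desSet]
  convert Fintype.card_subtype _

lemma eulerian_eq (n k : ℕ) :
    eulerian n k = (univ.filter fun π : Equiv.Perm (Fin n) => descentCount π = k).card := by
  classical
  rw [eulerian, Nat.card_eq_fintype_card]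
  convert Fintype.card_subtype _

/-- The positions having a successor. -/
def gapSet (n : ℕ) : Finset (Fin n) := univ.filter fun p => (p : ℕ) + 1 < n

lemma desSet_subset_gapSet (π : Equiv.Perm (Fin n)) : desSet π ⊆ gapSet n := by
  classical
  intro p hp
  simp only [desSet, mem_filter, mem_univ, true_and] at hp
  obtain ⟨h, -⟩ := hp
  simp [gapSet, h]

lemma card_gapSet : (gapSet n).card = n - 1 := by
  cases n with
  | zero => simp [gapSet]
  | succ m =>
    have : gapSet (m + 1) = (univ : Finset (Fin m)).map ⟨Fin.castSucc, Fin.castSucc_injective m⟩ := by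
      ext p
      simp only [gapSet, mem_filter, mem_univ, true_and, mem_map, Function.Embedding.coeFn_mk]
      constructor
      · intro h
        exact ⟨⟨(p : ℕ), by omega⟩, Fin.ext rfl⟩
      · rintro ⟨q, rfl⟩
        simpa using by omega
    rw [this, card_map, card_univ, Fintype.card_fin]
    omega

lemma lt_of_chain {α : Type*} [Preorder α] (g : ℕ → α) {p q : ℕ} (h : p < q)
    (H : ∀ m, p ≤ m → m < q → g m < g (m + 1)) : g p < g q := by
  induction q with
  | zero => omega
  | succ q ih =>
    rcases Nat.lt_or_ge p q with h' | h'
    · exact (ih h' fun m hm hm' => H m hm (by omega)).trans (H q (by omega) (by omega))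
    · have hpq : p = q := by omega
      subst hpq
      exact H p le_rfl (by omega)


lemma mem_desSet {π : Equiv.Perm (Fin n)} {p : Fin n} :
    p ∈ desSet π ↔ ∃ h : (p : ℕ) + 1 < n, π ⟨(p : ℕ) + 1, h⟩ < π p := by
  classical
  rw [desSet]
  convert mem_filter.trans (and_iff_right (mem_univ p))

/-- Pairs (σ, b) with b monotone surjective and σ strictly increasing on fibers of b. -/
def SortedPairs (n i : ℕ) :=
  {pb : Equiv.Perm (Fin n) × (Fin n → Fin i) //
    Monotone pb.2 ∧ Surjective pb.2 ∧
      ∀ p q : Fin n, p < q → pb.2 p = pb.2 q → pb.1 p < pb.1 q}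

noncomputable def sortEquiv (n i : ℕ) :
    {f : Fin n → Fin i // Surjective f} ≃ SortedPairs n i where
  toFun f := ⟨(Tuple.sort f.1, f.1 ∘ Tuple.sort f.1),
    Tuple.monotone_sort f.1,
    f.2.comp (Equiv.surjective _),
    fun p q hpq hbe => (Tuple.eq_sort_iff.mp rfl).2 p q hpq hbe⟩
  invFun pb := ⟨pb.1.2 ∘ pb.1.1.symm, pb.2.2.1.comp (Equiv.surjective _)⟩
  left_inv f := Subtype.ext <| funext fun x => by simp
  right_inv pb := by
    obtain ⟨⟨σ, b⟩, hmono, hsurj, hcond⟩ := pb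
    have hb : (b ∘ ⇑σ.symm) ∘ ⇑σ = b := by funext x; simp
    have hσ : σ = Tuple.sort (b ∘ ⇑σ.symm) := by
      rw [Tuple.eq_sort_iff]
      refine ⟨by rw [hb]; exact hmono, fun p q hpq he => ?_⟩
      apply hcond p q hpq
      simpa using he
    apply Subtype.ext
    dsimp only
    rw [← hσ, hb]


open Classical in
noncomputable def jumpSet (b : Fin n → Fin i) : Finset (Fin n) :=
  univ.filter fun p => ∃ h : (p : ℕ) + 1 < n, b p < b ⟨(p : ℕ) + 1, h⟩

lemma mem_jumpSet {b : Fin n → Fin i} {p : Fin n} :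
    p ∈ jumpSet b ↔ ∃ h : (p : ℕ) + 1 < n, b p < b ⟨(p : ℕ) + 1, h⟩ := by
  classical
  rw [jumpSet]
  convert mem_filter.trans (and_iff_right (mem_univ p))

lemma jumpSet_subset_gapSet (b : Fin n → Fin i) : jumpSet b ⊆ gapSet n := by
  intro p hp
  rw [mem_jumpSet] at hp
  obtain ⟨h, -⟩ := hp
  simp [gapSet, h]

/-- Decomposition of a `< m+1` filter. -/
lemma card_filter_lt_succ (S : Finset (Fin n)) (m : ℕ) (hm : m < n) :
    (S.filter fun s : Fin n => (s : ℕ) < m + 1).card =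
      (S.filter fun s : Fin n => (s : ℕ) < m).card + (if (⟨m, hm⟩ : Fin n) ∈ S then 1 else 0) := by
  classical
  have hdecomp : (S.filter fun s : Fin n => (s : ℕ) < m + 1) =
      (S.filter fun s : Fin n => (s : ℕ) < m) ∪ (S.filter fun s : Fin n => s = ⟨m, hm⟩) := by
    ext s
    simp only [mem_filter, mem_union]
    constructor
    · rintro ⟨hs, hlt⟩
      rcases Nat.lt_or_ge (s : ℕ) m with h' | h'
      · exact Or.inl ⟨hs, h'⟩
      · exact Or.inr ⟨hs, Fin.ext (by simp only [Fin.val_mk]; omega)⟩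
    · rintro (⟨hs, hlt⟩ | ⟨hs, rfl⟩)
      · exact ⟨hs, by omega⟩
      · exact ⟨hs, by simp⟩
  have hdisj : Disjoint (S.filter fun s : Fin n => (s : ℕ) < m) (S.filter fun s : Fin n => s = ⟨m, hm⟩) := by
    rw [Finset.disjoint_left]
    rintro s hs₁ hs₂
    simp only [mem_filter] at hs₁ hs₂
    obtain ⟨-, rfl⟩ := hs₂
    simp at hs₁
  rw [hdecomp, card_union_of_disjoint hdisj, filter_eq' S]
  split <;> simp

section MonoSurj

variable {b : Fin n → Fin i} (hmono : Monotone b) (hsurj : Surjective b)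
include hmono hsurj

lemma val_b_zero (hn : 0 < n) : (b ⟨0, hn⟩ : ℕ) = 0 := by
  obtain ⟨y, hy⟩ := hsurj ⟨0, (b ⟨0, hn⟩).pos⟩
  have h1 : b ⟨0, hn⟩ ≤ b y := hmono (by simp [Fin.le_def])
  rw [hy] at h1
  simpa [Fin.le_def] using h1

lemma val_b_step {m : ℕ} (hm : m + 1 < n) :
    (b ⟨m + 1, hm⟩ : ℕ) ≤ (b ⟨m, by omega⟩ : ℕ) + 1 := by
  by_contra hcon
  push_neg at hcon
  have hvi : (b ⟨m, by omega⟩ : ℕ) + 1 < i := lt_trans hcon (b ⟨m + 1, hm⟩).isLt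
  obtain ⟨y, hy⟩ := hsurj ⟨(b ⟨m, by omega⟩ : ℕ) + 1, hvi⟩
  rcases Nat.lt_or_ge (y : ℕ) (m + 1) with h' | h'
  · have : b y ≤ b ⟨m, by omega⟩ := hmono (by simp [Fin.le_def]; omega)
    rw [hy] at this
    simp [Fin.le_def] at this
  · have : b ⟨m + 1, hm⟩ ≤ b y := hmono (by simp [Fin.le_def]; omega)
    rw [hy] at this
    simp only [Fin.le_def] at this
    omega

lemma val_b_eq : ∀ (m : ℕ) (hm : m < n),
    (b ⟨m, hm⟩ : ℕ) = ((jumpSet b).filter fun s : Fin n => (s : ℕ) < m).card := by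
  intro m
  induction m with
  | zero =>
    intro hm
    rw [val_b_zero hmono hsurj hm]
    simp
  | succ m ih =>
    intro hm
    have hm' : m < n := by omega
    rw [card_filter_lt_succ _ m hm', ← ih hm']
    by_cases hj : (⟨m, hm'⟩ : Fin n) ∈ jumpSet b
    · rw [if_pos hj]
      rw [mem_jumpSet] at hj
      obtain ⟨h, hlt⟩ := hj
      have hle := val_b_step hmono hsurj (m := m) hm
      simp only [Fin.lt_def] at hlt
      omega
    · rw [if_neg hj, mem_jumpSet] at *
      push_neg at hj
      have := hj hm
      have hle : b ⟨m, hm'⟩ ≤ b ⟨m + 1, hm⟩ := hmono (by simp [Fin.le_def])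
      simp only [Fin.lt_def, Fin.le_def, not_lt] at this hle ⊢
      omega

lemma val_b_last (hn : 0 < n) : (b ⟨n - 1, by omega⟩ : ℕ) = i - 1 := by
  have hi : 0 < i := (b ⟨0, hn⟩).pos
  obtain ⟨y, hy⟩ := hsurj ⟨i - 1, by omega⟩
  have h1 : b y ≤ b ⟨n - 1, by omega⟩ := hmono (by simp [Fin.le_def]; omega)
  rw [hy] at h1
  simp only [Fin.le_def] at h1
  have h2 := (b ⟨n - 1, by omega⟩).isLt
  omega

lemma card_jumpSet (hn : 0 < n) : (jumpSet b).card = i - 1 := by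
  have h1 := val_b_eq hmono hsurj (n - 1) (by omega)
  rw [val_b_last hmono hsurj hn] at h1
  have h2 : (jumpSet b).filter (fun s : Fin n => (s : ℕ) < n - 1) = jumpSet b := by
    apply filter_true_of_mem
    intro s hs
    rw [mem_jumpSet] at hs
    obtain ⟨h, -⟩ := hs
    omega
  rw [h2] at h1
  omega

end MonoSurj


section Bars
variable (S : Finset (Fin n)) (hS : S ⊆ gapSet n) (hcard : S.card = i - 1) (hi : 0 < i)

/-- The monotone surjection determined by a set of bars. -/
def ofBars : Fin n → Fin i := fun x =>
  ⟨(S.filter fun s : Fin n => (s : ℕ) < (x : ℕ)).card, by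
    have h1 : (S.filter fun s : Fin n => (s : ℕ) < (x : ℕ)).card ≤ S.card :=
      card_le_card (filter_subset _ _)
    omega⟩

lemma ofBars_mono : Monotone (ofBars S hcard hi) := by
  intro x y hxy
  simp only [ofBars, Fin.mk_le_mk, Fin.le_def]
  apply card_le_card
  apply monotone_filter_right
  intro s hs
  simp only [Fin.le_def] at hxy
  omega

include hS in
lemma jumpSet_ofBars : jumpSet (ofBars S hcard hi) = S := by
  ext p
  rw [mem_jumpSet]
  constructor
  · rintro ⟨h, hlt⟩
    simp only [ofBars, Fin.lt_def] at hlt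
    rw [card_filter_lt_succ S (p : ℕ) (by omega)] at hlt
    split at hlt
    · next hmem => simpa using hmem
    · omega
  · intro hp
    have h : (p : ℕ) + 1 < n := by
      have := hS hp
      simp only [gapSet, mem_filter] at this
      exact this.2
    refine ⟨h, ?_⟩
    simp only [ofBars, Fin.lt_def]
    rw [card_filter_lt_succ S (p : ℕ) (by omega)]
    have : (⟨(p : ℕ), by omega⟩ : Fin n) ∈ S := by simpa using hp
    rw [if_pos this]
    omega

include hS in
lemma ofBars_surjective (hn : 0 < n) : Surjective (ofBars S hcard hi) := by
  intro v
  have hlast : ((ofBars S hcard hi) ⟨n - 1, by omega⟩ : ℕ) = i - 1 := by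
    simp only [ofBars]
    have : S.filter (fun s : Fin n => (s : ℕ) < n - 1) = S := by
      apply filter_true_of_mem
      intro s hs
      have := hS hs
      simp only [gapSet, mem_filter] at this
      omega
    rw [this, hcard]
  set b := ofBars S hcard hi with hb
  have hstep : ∀ (m : ℕ) (hm : m + 1 < n), (b ⟨m + 1, hm⟩ : ℕ) ≤ (b ⟨m, by omega⟩ : ℕ) + 1 := by
    intro m hm
    simp only [hb, ofBars]
    rw [card_filter_lt_succ S m (by omega)]
    split <;> omega
  classical
  have hTne : (univ.filter fun x : Fin n => (v : ℕ) ≤ (b x : ℕ)).Nonempty := by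
    refine ⟨⟨n - 1, by omega⟩, ?_⟩
    simp only [mem_filter, mem_univ, true_and, hlast]
    omega
  set T := univ.filter fun x : Fin n => (v : ℕ) ≤ (b x : ℕ) with hT
  set x := T.min' hTne with hx
  have hxT : x ∈ T := min'_mem _ _
  have hxv : (v : ℕ) ≤ (b x : ℕ) := by
    rw [hT] at hxT
    simpa using hxT
  refine ⟨x, ?_⟩
  rcases Nat.lt_or_ge (v : ℕ) (b x : ℕ) with hlt | hge
  · exfalso
    have hx0 : (x : ℕ) ≠ 0 := by
      intro h0
      have : (b x : ℕ) = 0 := by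
        have : x = ⟨0, by omega⟩ := Fin.ext h0
        rw [this]
        simp [hb, ofBars]
      omega
    obtain ⟨m, hm⟩ : ∃ m, (x : ℕ) = m + 1 := ⟨(x : ℕ) - 1, by omega⟩
    have hmn : m + 1 < n := by rw [← hm]; exact x.isLt
    have hxm : x = ⟨m + 1, hmn⟩ := Fin.ext hm
    have hnotT : (⟨m, by omega⟩ : Fin n) ∉ T := by
      intro hmem
      have h2 : x ≤ (⟨m, by omega⟩ : Fin n) := hx.le.trans (min'_le T _ hmem)
      have h3 := Fin.le_def.mp h2
      simp only [Fin.val_mk] at h3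
      omega
    have hbm : (b ⟨m, by omega⟩ : ℕ) < (v : ℕ) := by
      by_contra hcon
      exact hnotT (by simp only [hT, mem_filter, mem_univ, true_and]; omega)
    have := hstep m hmn
    rw [← hxm] at this
    omega
  · exact Fin.ext (by omega)

end Bars

lemma strictCond_iff (σ : Equiv.Perm (Fin n)) (b : Fin n → Fin i) (hmono : Monotone b) :
    (∀ p q : Fin n, p < q → b p = b q → σ p < σ q) ↔ desSet σ ⊆ jumpSet b := by
  constructor
  · intro hc p hp
    rw [mem_desSet] at hp
    obtain ⟨h, hlt⟩ := hp
    rw [mem_jumpSet]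
    refine ⟨h, ?_⟩
    by_contra hcon
    push_neg at hcon
    have hle : b p ≤ b ⟨(p : ℕ) + 1, h⟩ := hmono (by simp [Fin.le_def])
    have heq : b p = b ⟨(p : ℕ) + 1, h⟩ := le_antisymm hle hcon
    exact absurd hlt (lt_asymm (hc p ⟨(p : ℕ) + 1, h⟩ (by simp [Fin.lt_def]) heq))
  · intro hsub p q hpq heq
    have hblock : ∀ (m : ℕ), (p : ℕ) ≤ m → m ≤ (q : ℕ) → ∀ (hm : m < n), b ⟨m, hm⟩ = b p := by
      intro m h1 h2 hm
      have e1 : b p ≤ b ⟨m, hm⟩ := hmono (by simp [Fin.le_def]; omega)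
      have e2 : b ⟨m, hm⟩ ≤ b q := hmono (by simp [Fin.le_def]; omega)
      rw [← heq] at e2
      exact le_antisymm e2 e1
    set g : ℕ → Fin n := fun m => if h : m < n then σ ⟨m, h⟩ else σ p with hg
    have key : g (p : ℕ) < g (q : ℕ) := by
      apply lt_of_chain g (show (p : ℕ) < (q : ℕ) from hpq)
      intro m hm hmq
      have h1 : m + 1 < n := lt_of_le_of_lt hmq q.isLt
      have h0 : m < n := by omega
      show (if h : m < n then σ ⟨m, h⟩ else σ p) < (if h : m + 1 < n then σ ⟨m + 1, h⟩ else σ p)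
      rw [dif_pos h0, dif_pos h1]
      have hnj : (⟨m, h0⟩ : Fin n) ∉ jumpSet b := by
        rw [mem_jumpSet]
        rintro ⟨h, hjlt⟩
        rw [hblock m hm (by omega) h0, hblock (m + 1) (by omega) (by omega) h] at hjlt
        exact lt_irrefl _ hjlt
      have hnd : (⟨m, h0⟩ : Fin n) ∉ desSet σ := fun hd => hnj (hsub hd)
      rw [mem_desSet] at hnd
      push_neg at hnd
      have hge := hnd h1
      have hne : σ ⟨m, h0⟩ ≠ σ ⟨m + 1, h1⟩ := by
        intro hcon
        have := σ.injective hcon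
        simp [Fin.ext_iff] at this
      exact lt_of_le_of_ne hge hne
    have e1 : g (p : ℕ) = σ p := by rw [hg]; simp [dif_pos p.isLt]
    have e2 : g (q : ℕ) = σ q := by rw [hg]; simp [dif_pos q.isLt]
    rwa [e1, e2] at key

noncomputable def innerEquiv (σ : Equiv.Perm (Fin n)) (hn : 0 < n) (hi : 0 < i) :
    {b : Fin n → Fin i // Monotone b ∧ Surjective b ∧
        ∀ p q : Fin n, p < q → b p = b q → σ p < σ q} ≃
      {S : Finset (Fin n) // desSet σ ⊆ S ∧ S ⊆ gapSet n ∧ S.card = i - 1} where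
  toFun b := ⟨jumpSet b.1,
    (strictCond_iff σ b.1 b.2.1).mp b.2.2.2,
    jumpSet_subset_gapSet b.1,
    card_jumpSet b.2.1 b.2.2.1 hn⟩
  invFun S := ⟨ofBars S.1 S.2.2.2 hi,
    ofBars_mono S.1 S.2.2.2 hi,
    ofBars_surjective S.1 S.2.2.1 S.2.2.2 hi hn,
    (strictCond_iff σ _ (ofBars_mono S.1 S.2.2.2 hi)).mpr
      (by rw [jumpSet_ofBars S.1 S.2.2.1 S.2.2.2 hi]; exact S.2.1)⟩
  left_inv b := by
    apply Subtype.ext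
    funext x
    apply Fin.ext
    show ((jumpSet b.1).filter fun s : Fin n => (s : ℕ) < (x : ℕ)).card = ((b.1 x : ℕ))
    have := val_b_eq b.2.1 b.2.2.1 (x : ℕ) x.isLt
    simp only [Fin.eta] at this
    omega
  right_inv S := Subtype.ext (jumpSet_ofBars S.1 S.2.2.1 S.2.2.2 hi)

open Classical in
lemma card_inner (σ : Equiv.Perm (Fin n)) (hn : 0 < n) (hi : 0 < i) :
    Nat.card {b : Fin n → Fin i // Monotone b ∧ Surjective b ∧
        ∀ p q : Fin n, p < q → b p = b q → σ p < σ q} =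
      if (desSet σ).card ≤ i - 1 then
        (n - 1 - (desSet σ).card).choose (i - 1 - (desSet σ).card) else 0 := by
  classical
  rw [Nat.card_congr (innerEquiv σ hn hi), Nat.card_eq_fintype_card, Fintype.card_subtype]
  set D := desSet σ with hD
  by_cases hd : D.card ≤ i - 1
  · rw [if_pos hd]
    have hDg : D ⊆ gapSet n := desSet_subset_gapSet σ
    have hcg : (gapSet n \ D).card = n - 1 - D.card := by
      rw [card_sdiff_of_subset hDg, card_gapSet]
    rw [← hcg, ← Finset.card_powersetCard]
    apply card_nbij' (i := fun S => S \ D) (j := fun T => T ∪ D)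
    · intro S hS
      simp only [mem_filter, mem_univ, true_and, mem_coe] at hS
      obtain ⟨h1, h2, h3⟩ := hS
      simp only [mem_coe, mem_powersetCard]
      constructor
      · exact sdiff_subset_sdiff h2 Subset.rfl
      · rw [card_sdiff_of_subset h1, h3]
    · intro T hT
      rw [mem_coe, mem_powersetCard] at hT
      obtain ⟨h1, h2⟩ := hT
      have hdisj : Disjoint T D := disjoint_of_subset_left h1 (sdiff_disjoint)
      simp only [mem_filter, mem_univ, true_and, mem_coe]
      refine ⟨subset_union_right, union_subset (h1.trans (sdiff_subset)) hDg, ?_⟩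
      rw [card_union_of_disjoint hdisj, h2]
      omega
    · intro S hS
      simp only [mem_filter, mem_univ, true_and, mem_coe] at hS
      exact sdiff_union_of_subset hS.1
    · intro T hT
      rw [mem_coe, mem_powersetCard] at hT
      exact union_sdiff_cancel_right (disjoint_of_subset_left hT.1 (sdiff_disjoint))
  · rw [if_neg hd]
    rw [Finset.card_eq_zero, filter_eq_empty_iff]
    rintro S - ⟨h1, h2, h3⟩
    exact hd (h3 ▸ card_le_card h1)


lemma card_surj_eq_sum (hn : 0 < n) (hi : 0 < i) (hin : i ≤ n) :
    Nat.card {f : Fin n → Fin i // Surjective f} =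
      ∑ j ∈ range i, eulerian n j * (n - 1 - j).choose (i - 1 - j) := by
  classical
  rw [Nat.card_congr (sortEquiv n i)]
  unfold SortedPairs
  rw [Nat.card_congr (Equiv.subtypeProdEquivSigmaSubtype
    (fun (σ : Equiv.Perm (Fin n)) (b : Fin n → Fin i) =>
      Monotone b ∧ Surjective b ∧ ∀ p q : Fin n, p < q → b p = b q → σ p < σ q))]
  rw [Nat.card_eq_fintype_card, Fintype.card_sigma]
  set F : ℕ → ℕ := fun j => if j ≤ i - 1 then (n - 1 - j).choose (i - 1 - j) else 0 with hF
  have hterm : ∀ σ : Equiv.Perm (Fin n),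
      Fintype.card {b : Fin n → Fin i // Monotone b ∧ Surjective b ∧
          ∀ p q : Fin n, p < q → b p = b q → σ p < σ q} = F (descentCount σ) := by
    intro σ
    rw [← Nat.card_eq_fintype_card, card_inner σ hn hi, descentCount_eq, hF]
  rw [Finset.sum_congr rfl fun σ _ => hterm σ]
  have hmaps : ∀ σ : Equiv.Perm (Fin n), σ ∈ (univ : Finset (Equiv.Perm (Fin n))) →
      descentCount σ ∈ range n := by
    intro σ _
    have h1 : (desSet σ).card ≤ n - 1 := card_gapSet ▸ card_le_card (desSet_subset_gapSet σ)
    rw [mem_range, descentCount_eq]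
    omega
  rw [← Finset.sum_fiberwise_of_maps_to (g := descentCount) hmaps
    (fun σ => F (descentCount σ))]
  have hfib : ∀ j ∈ range n,
      (∑ σ ∈ univ.filter fun σ : Equiv.Perm (Fin n) => descentCount σ = j,
        F (descentCount σ)) = eulerian n j * F j := by
    intro j _
    rw [Finset.sum_congr rfl (fun σ hσ => by rw [(mem_filter.mp hσ).2]),
      Finset.sum_const, eulerian_eq, smul_eq_mul]
  rw [Finset.sum_congr rfl hfib]
  rw [← Finset.sum_range_add_sum_Ico _ hin]
  have h2 : ∀ j ∈ Ico i n, eulerian n j * F j = 0 := by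
    intro j hj
    rw [mem_Ico] at hj
    rw [hF]
    simp only []
    rw [if_neg (by omega), mul_zero]
  rw [Finset.sum_congr rfl h2, Finset.sum_const_zero, add_zero]
  exact Finset.sum_congr rfl fun j hj => by
    rw [mem_range] at hj
    rw [hF]
    simp only []
    rw [if_pos (by omega)]


open Classical in
/-- The fiber partition of a function. -/
noncomputable def fiberPartition (f : Fin n → Fin i) : Finpartition (univ : Finset (Fin n)) :=
  Finpartition.ofSetoid (Setoid.ker f)

open Classical in
lemma mem_fiberPartition_part (f : Fin n → Fin i) (a b : Fin n) :
    b ∈ (fiberPartition f).part a ↔ f a = f b := by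
  rw [fiberPartition]
  rw [Finpartition.mem_part_ofSetoid_iff_rel]
  rfl

lemma eq_part_of_mem_parts (f : Fin n → Fin i) {t : Finset (Fin n)} (ht : t ∈ (fiberPartition f).parts)
    {a : Fin n} (ha : a ∈ t) : t = (fiberPartition f).part a :=
  ((fiberPartition f).part_eq_of_mem ht ha).symm

lemma const_on_parts (f : Fin n → Fin i) {t : Finset (Fin n)} (ht : t ∈ (fiberPartition f).parts)
    {a b : Fin n} (ha : a ∈ t) (hb : b ∈ t) : f a = f b := by
  have h1 := eq_part_of_mem_parts f ht ha
  rw [h1] at hb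
  exact (mem_fiberPartition_part f a b).mp hb

open Classical in
/-- The value of `f` on a part. -/
noncomputable def partLabel (f : Fin n → Fin i) (t : Finset (Fin n))
    (ht : t ∈ (fiberPartition f).parts) : Fin i :=
  f (t.min' ((fiberPartition f).nonempty_of_mem_parts ht))

lemma partLabel_bijective (f : Fin n → Fin i) (hf : Surjective f) :
    Bijective fun t : {t // t ∈ (fiberPartition f).parts} => partLabel f t.1 t.2 := by
  constructor
  · rintro ⟨t, ht⟩ ⟨u, hu⟩ he
    simp only [partLabel] at he
    apply Subtype.ext
    show t = u
    have h1 := eq_part_of_mem_parts f ht (min'_mem _ ((fiberPartition f).nonempty_of_mem_parts ht))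
    have h2 := eq_part_of_mem_parts f hu (min'_mem _ ((fiberPartition f).nonempty_of_mem_parts hu))
    rw [h1, h2]
    ext b
    rw [mem_fiberPartition_part, mem_fiberPartition_part, he]
  · intro v
    obtain ⟨a, ha⟩ := hf v
    refine ⟨⟨(fiberPartition f).part a, (fiberPartition f).part_mem.2 (mem_univ a)⟩, ?_⟩
    simp only [partLabel]
    rw [← ha]
    symm
    exact (mem_fiberPartition_part f a _).mp (min'_mem _ _)

lemma card_fiberPartition_parts (f : Fin n → Fin i) (hf : Surjective f) :
    (fiberPartition f).parts.card = i := by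
  classical
  have := Fintype.card_of_bijective (partLabel_bijective f hf)
  rwa [Fintype.card_coe, Fintype.card_fin] at this

open Classical in
universe u v in
lemma heq_equiv_of {α₁ α₂ : Type u} {β : Type v} (h : α₁ = α₂) {e₁ : α₁ ≃ β} {e₂ : α₂ ≃ β}
    (H : ∀ (x₁ : α₁) (x₂ : α₂), HEq x₁ x₂ → e₁ x₁ = e₂ x₂) : HEq e₁ e₂ := by
  subst h
  exact heq_of_eq (Equiv.ext fun x => H x x HEq.rfl)

noncomputable def surjPartEquiv (n i : ℕ) :
    {f : Fin n → Fin i // Surjective f} ≃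
      Σ P : {P : Finpartition (univ : Finset (Fin n)) // P.parts.card = i},
        ({t // t ∈ P.1.parts} ≃ Fin i) where
  toFun f := ⟨⟨fiberPartition f.1, card_fiberPartition_parts f.1 f.2⟩,
    Equiv.ofBijective _ (partLabel_bijective f.1 f.2)⟩
  invFun Pe := ⟨fun x => Pe.2 ⟨Pe.1.1.part x, Pe.1.1.part_mem.2 (mem_univ x)⟩, by
    intro v
    obtain ⟨a, hat⟩ := Pe.1.1.nonempty_of_mem_parts (Pe.2.symm v).2
    refine ⟨a, ?_⟩
    have h1 : Pe.1.1.part a = (Pe.2.symm v).1 := Pe.1.1.part_eq_of_mem (Pe.2.symm v).2 hat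
    show Pe.2 ⟨Pe.1.1.part a, Pe.1.1.part_mem.2 (mem_univ a)⟩ = v
    rw [show (⟨Pe.1.1.part a, Pe.1.1.part_mem.2 (mem_univ a)⟩ : {t // t ∈ Pe.1.1.parts})
      = Pe.2.symm v from Subtype.ext h1]
    exact Pe.2.apply_symm_apply v⟩
  left_inv f := by
    apply Subtype.ext
    funext x
    show partLabel f.1 ((fiberPartition f.1).part x) ((fiberPartition f.1).part_mem.2 (mem_univ x))
      = f.1 x
    rw [partLabel]
    symm
    apply (mem_fiberPartition_part f.1 x _).mp
    exact min'_mem _ _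
  right_inv Pe := by
    obtain ⟨⟨P, hP⟩, e⟩ := Pe
    have hfib : fiberPartition (fun x => e ⟨P.part x, P.part_mem.2 (mem_univ x)⟩) = P := by
      apply Finpartition.ext
      ext t
      constructor
      · intro ht
        obtain ⟨a, hat⟩ := (fiberPartition _).nonempty_of_mem_parts ht
        have h1 := eq_part_of_mem_parts _ ht hat
        have h2 : (fiberPartition (fun x => e ⟨P.part x, P.part_mem.2 (mem_univ x)⟩)).part a
            = P.part a := by
          ext b
          rw [mem_fiberPartition_part]
          constructor
          · intro he
            have h3 : P.part a = P.part b := by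
              have := e.injective he
              exact congrArg Subtype.val this
            rw [h3]
            exact P.mem_part (mem_univ b)
          · intro hb
            have h3 : P.part b = P.part a := (P.part_eq_of_mem (P.part_mem.2 (mem_univ a)) hb)
            congr 1
            exact Subtype.ext h3.symm
        rw [h1, h2]
        exact P.part_mem.2 (mem_univ a)
      · intro ht
        obtain ⟨a, hat⟩ := P.nonempty_of_mem_parts ht
        have h2 : P.part a = t := P.part_eq_of_mem ht hat
        have h3 : (fiberPartition (fun x => e ⟨P.part x, P.part_mem.2 (mem_univ x)⟩)).part a
            ∈ (fiberPartition _).parts := (fiberPartition _).part_mem.2 (mem_univ a)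
        have h4 : (fiberPartition (fun x => e ⟨P.part x, P.part_mem.2 (mem_univ x)⟩)).part a = t := by
          ext b
          rw [mem_fiberPartition_part]
          constructor
          · intro he
            have h5 : P.part a = P.part b := congrArg Subtype.val (e.injective he)
            rw [← h2, h5]
            exact P.mem_part (mem_univ b)
          · intro hb
            have h5 : P.part b = P.part a := by
              rw [h2]
              exact P.part_eq_of_mem ht hb
            congr 1
            exact Subtype.ext h5.symm
        rw [← h4]
        exact h3
    set g : Fin n → Fin i := fun x => e ⟨P.part x, P.part_mem.2 (mem_univ x)⟩ with hg
    have hgsurj : Surjective g := by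
      intro v
      obtain ⟨a, hat⟩ := P.nonempty_of_mem_parts (e.symm v).2
      refine ⟨a, ?_⟩
      have h1 : P.part a = (e.symm v).1 := P.part_eq_of_mem (e.symm v).2 hat
      show e ⟨P.part a, P.part_mem.2 (mem_univ a)⟩ = v
      rw [show (⟨P.part a, P.part_mem.2 (mem_univ a)⟩ : {t // t ∈ P.parts})
        = e.symm v from Subtype.ext h1]
      exact e.apply_symm_apply v
    show (⟨⟨fiberPartition g, card_fiberPartition_parts g hgsurj⟩,
      Equiv.ofBijective _ (partLabel_bijective g hgsurj)⟩ :
        Σ P : {P : Finpartition (univ : Finset (Fin n)) // P.parts.card = i},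
          ({t // t ∈ P.1.parts} ≃ Fin i)) = ⟨⟨P, hP⟩, e⟩
    refine Sigma.ext (Subtype.ext hfib) (heq_equiv_of (show {t // t ∈ (fiberPartition g).parts} = {t // t ∈ P.parts} by rw [hfib]) ?_)
    intro x₁ x₂ hx
    have hiff : ∀ t : Finset (Fin n), t ∈ (fiberPartition g).parts ↔ t ∈ P.parts := by
      rw [hfib]
      intro t
      rfl
    have hval : x₁.1 = x₂.1 := (Subtype.heq_iff_coe_eq hiff).mp hx
    show partLabel g x₁.1 x₁.2 = e x₂
    rw [partLabel]
    show e ⟨P.part (x₁.1.min' _), P.part_mem.2 (mem_univ _)⟩ = e x₂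
    apply congrArg
    apply Subtype.ext
    show P.part (x₁.1.min' _) = x₂.1
    apply P.part_eq_of_mem x₂.2
    rw [← hval]
    exact min'_mem _ _


lemma card_surj_eq_stirling (n i : ℕ) :
    Nat.card {f : Fin n → Fin i // Surjective f} = stirling n i * i.factorial := by
  classical
  rw [Nat.card_congr (surjPartEquiv n i), Nat.card_eq_fintype_card, Fintype.card_sigma]
  have hterm : ∀ P : {P : Finpartition (univ : Finset (Fin n)) // P.parts.card = i},
      Fintype.card ({t // t ∈ P.1.parts} ≃ Fin i) = i.factorial := by
    intro P
    have hc : Fintype.card {t // t ∈ P.1.parts} = i := by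
      rw [Fintype.card_coe, P.2]
    have e0 : {t // t ∈ P.1.parts} ≃ Fin i := Fintype.equivFinOfCardEq hc
    rw [Fintype.card_equiv e0, hc]
  rw [Finset.sum_congr rfl fun P _ => hterm P, Finset.sum_const, smul_eq_mul]
  rw [stirling, Nat.card_eq_fintype_card, card_univ]



end EulerianAux


theorem eulerian_eq_alternating_sum_stirling (n k : ℕ) (hn : 1 ≤ n) (hk : k ≤ n - 1) :
    (eulerian n k : ℤ) =
      ∑ i ∈ Finset.Icc 1 (k + 1),
        (-1 : ℤ) ^ (k + 1 - i) * ((n - i).choose (k + 1 - i) : ℤ) *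
          (stirling n i : ℤ) * (i.factorial : ℤ) := by
  classical
  have hkn : k + 1 ≤ n := by omega
  have key : ∀ i ∈ Finset.Icc 1 (k + 1),
      (stirling n i : ℤ) * (i.factorial : ℤ) =
        ∑ j ∈ Finset.range i, (eulerian n j : ℤ) * ((n - 1 - j).choose (i - 1 - j) : ℤ) := by
    intro i hi
    rw [Finset.mem_Icc] at hi
    have h1 := EulerianAux.card_surj_eq_stirling n i
    have h2 := EulerianAux.card_surj_eq_sum (n := n) (i := i) (by omega) (by omega) (by omega)
    rw [h1] at h2
    have h3 := congrArg (fun m : ℕ => (m : ℤ)) h2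
    push_cast at h3 ⊢
    linarith [h3]
  have inner : ∀ j ∈ Finset.range (k + 1),
      (∑ i ∈ Finset.Icc (j + 1) (k + 1),
        (-1 : ℤ) ^ (k + 1 - i) * ((n - i).choose (k + 1 - i) : ℤ) *
          ((n - 1 - j).choose (i - 1 - j) : ℤ)) = if j = k then 1 else 0 := by
    intro j hj
    rw [Finset.mem_range] at hj
    have hjk : j ≤ k := by omega
    set N := n - 1 - j with hN
    set r := k - j with hr
    have hrN : r ≤ N := by omega
    have hre : ∀ i ∈ Finset.Icc (j + 1) (k + 1), (-1 : ℤ) ^ (k + 1 - i) *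
        ((n - i).choose (k + 1 - i) : ℤ) * ((n - 1 - j).choose (i - 1 - j) : ℤ)
        = (-1 : ℤ) ^ (r - (i - 1 - j)) * ((N - (i - 1 - j)).choose (r - (i - 1 - j)) : ℤ)
          * ((N).choose (i - 1 - j) : ℤ) := by
      intro i hi
      rw [Finset.mem_Icc] at hi
      have e1 : k + 1 - i = r - (i - 1 - j) := by omega
      have e2 : n - i = N - (i - 1 - j) := by omega
      rw [e1, e2, hN]
    rw [Finset.sum_congr rfl hre]
    rw [show Finset.Icc (j + 1) (k + 1) = Finset.map
      ⟨fun m => j + 1 + m, add_right_injective (j + 1)⟩ (Finset.range (r + 1)) from by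
        ext x
        simp only [Finset.mem_Icc, Finset.mem_map, Finset.mem_range,
          Function.Embedding.coeFn_mk]
        constructor
        · intro hx
          exact ⟨x - (j + 1), by omega, by omega⟩
        · rintro ⟨m, hm, rfl⟩
          omega]
    rw [Finset.sum_map]
    simp only [Function.Embedding.coeFn_mk]
    have hsimp : ∀ m ∈ Finset.range (r + 1),
        (-1 : ℤ) ^ (r - (j + 1 + m - 1 - j)) *
          ((N - (j + 1 + m - 1 - j)).choose (r - (j + 1 + m - 1 - j)) : ℤ) *
          ((N).choose (j + 1 + m - 1 - j) : ℤ)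
        = ((N).choose r : ℤ) * ((-1 : ℤ) ^ r * ((-1 : ℤ) ^ m * ((r).choose m : ℤ))) := by
      intro m hm
      rw [Finset.mem_range] at hm
      have e3 : j + 1 + m - 1 - j = m := by omega
      rw [e3]
      have hchoose : N.choose r * (r.choose m) = N.choose m * ((N - m).choose (r - m)) :=
        Nat.choose_mul (by omega)
      have hnat : (N - m).choose (r - m) * N.choose m = N.choose r * r.choose m :=
        (mul_comm _ _).trans hchoose.symm
      have hcast : ((N - m).choose (r - m) : ℤ) * ((N).choose m : ℤ)
          = ((N).choose r : ℤ) * ((r).choose m : ℤ) := by exact_mod_cast hnat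
      have hsign2 : (-1 : ℤ) ^ (r - m) = (-1 : ℤ) ^ r * (-1 : ℤ) ^ m := by
        have h2m : ((-1 : ℤ) ^ m) * ((-1 : ℤ) ^ m) = 1 := by
          rw [← pow_add, show m + m = 2 * m by ring, pow_mul]
          norm_num
        have hsign : (-1 : ℤ) ^ (r - m) * ((-1 : ℤ) ^ m) = (-1 : ℤ) ^ r := by
          rw [← pow_add]
          congr 1
          omega
        calc (-1 : ℤ) ^ (r - m) = (-1 : ℤ) ^ (r - m) * (((-1 : ℤ) ^ m) * ((-1 : ℤ) ^ m)) := by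
              rw [h2m, mul_one]
          _ = ((-1 : ℤ) ^ (r - m) * ((-1 : ℤ) ^ m)) * ((-1 : ℤ) ^ m) := by ring
          _ = (-1 : ℤ) ^ r * (-1 : ℤ) ^ m := by rw [hsign]
      calc (-1 : ℤ) ^ (r - m) * ((N - m).choose (r - m) : ℤ) * ((N).choose m : ℤ)
          = (-1 : ℤ) ^ (r - m) * (((N - m).choose (r - m) : ℤ) * ((N).choose m : ℤ)) := by
            ring
        _ = (-1 : ℤ) ^ (r - m) * (((N).choose r : ℤ) * ((r).choose m : ℤ)) := by rw [hcast]
        _ = ((N).choose r : ℤ) * ((-1 : ℤ) ^ r * ((-1 : ℤ) ^ m * ((r).choose m : ℤ))) := by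
            rw [hsign2]; ring
    rw [Finset.sum_congr rfl hsimp, ← Finset.mul_sum]
    have halt : ∑ m ∈ Finset.range (r + 1),
        (-1 : ℤ) ^ r * ((-1 : ℤ) ^ m * ((r).choose m : ℤ))
        = (-1 : ℤ) ^ r * (if r = 0 then 1 else 0) := by
      rw [← Finset.mul_sum, Int.alternating_sum_range_choose]
    rw [halt]
    by_cases hjk' : j = k
    · subst hjk'
      simp [hr]
    · have hr0 : r ≠ 0 := by omega
      rw [if_neg hr0, if_neg hjk']
      ring
  have step2 : (∑ i ∈ Finset.Icc 1 (k + 1),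
        (-1 : ℤ) ^ (k + 1 - i) * ((n - i).choose (k + 1 - i) : ℤ) *
          (stirling n i : ℤ) * (i.factorial : ℤ))
      = ∑ j ∈ Finset.range (k + 1), (eulerian n j : ℤ) *
          (∑ i ∈ Finset.Icc (j + 1) (k + 1),
            (-1 : ℤ) ^ (k + 1 - i) * ((n - i).choose (k + 1 - i) : ℤ) *
              ((n - 1 - j).choose (i - 1 - j) : ℤ)) := by
    calc (∑ i ∈ Finset.Icc 1 (k + 1),
          (-1 : ℤ) ^ (k + 1 - i) * ((n - i).choose (k + 1 - i) : ℤ) *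
            (stirling n i : ℤ) * (i.factorial : ℤ))
        = ∑ i ∈ Finset.Icc 1 (k + 1), ∑ j ∈ Finset.range i,
            ((-1 : ℤ) ^ (k + 1 - i) * ((n - i).choose (k + 1 - i) : ℤ)) *
              ((eulerian n j : ℤ) * ((n - 1 - j).choose (i - 1 - j) : ℤ)) :=
          Finset.sum_congr rfl fun i hi => by
            rw [mul_assoc ((-1 : ℤ) ^ (k + 1 - i) * ((n - i).choose (k + 1 - i) : ℤ))
              (stirling n i : ℤ) (i.factorial : ℤ), key i hi, Finset.mul_sum]
      _ = ∑ j ∈ Finset.range (k + 1), ∑ i ∈ Finset.Icc (j + 1) (k + 1),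
            ((-1 : ℤ) ^ (k + 1 - i) * ((n - i).choose (k + 1 - i) : ℤ)) *
              ((eulerian n j : ℤ) * ((n - 1 - j).choose (i - 1 - j) : ℤ)) :=
          Finset.sum_comm' (by
            intro x y
            simp only [Finset.mem_Icc, Finset.mem_range]
            omega)
      _ = ∑ j ∈ Finset.range (k + 1), (eulerian n j : ℤ) *
            (∑ i ∈ Finset.Icc (j + 1) (k + 1),
              (-1 : ℤ) ^ (k + 1 - i) * ((n - i).choose (k + 1 - i) : ℤ) *
                ((n - 1 - j).choose (i - 1 - j) : ℤ)) :=
          Finset.sum_congr rfl fun j _ => by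
            rw [Finset.mul_sum]
            exact Finset.sum_congr rfl fun i _ => by ring
  rw [step2, Finset.sum_congr rfl fun j hj => by rw [inner j hj]]
  simp only [mul_ite, mul_one, mul_zero]
  rw [Finset.sum_ite_eq' (Finset.range (k + 1)) k (fun j => (eulerian n j : ℤ)),
    if_pos (Finset.mem_range.mpr (by omega))]
end

section
/- (Worpitzky's identity) For every integer n ≥ 1 and every integer k ≥ 0, (k+1)^n = Σ_{i=0}^{n−1} A(n,i) · C(k+n−i, n), where C(a,b) denotes the binomial coefficient. -/
namespace WorpitzkyAux

open Finset
open scoped Classical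

variable {n k : ℕ}

/-- `P σ i` : position `i` is a descent of `σ`. -/
def P (σ : Equiv.Perm (Fin n)) (i : ℕ) : Prop :=
  ∃ h : i + 1 < n, σ ⟨i + 1, h⟩ < σ ⟨i, Nat.lt_of_succ_lt h⟩

/-- number of descents of `σ` below `j`. -/
noncomputable def b (σ : Equiv.Perm (Fin n)) (j : ℕ) : ℕ :=
  ((Finset.range j).filter (P σ)).card

lemma b_succ (σ : Equiv.Perm (Fin n)) (j : ℕ) :
    b σ (j + 1) = b σ j + (if P σ j then 1 else 0) := by
  simp only [b, Finset.range_add_one, Finset.filter_insert]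
  split_ifs with h
  · rw [Finset.card_insert_of_notMem (by simp)]
  · simp

lemma b_le (σ : Equiv.Perm (Fin n)) (j : ℕ) : b σ j ≤ j :=
  le_trans (Finset.card_filter_le _ _) (by simp)

lemma b_mono (σ : Equiv.Perm (Fin n)) {j j' : ℕ} (h : j ≤ j') : b σ j ≤ b σ j' := by
  classical
  exact Finset.card_le_card (Finset.filter_subset_filter _ (Finset.range_subset_range.2 h))

lemma b_gap (σ : Equiv.Perm (Fin n)) (j : ℕ) : ∀ c : ℕ, b σ (j + c) ≤ b σ j + c := by
  intro c
  induction c with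
  | zero => simp
  | succ c ih =>
    rw [← Nat.add_assoc, b_succ]
    split_ifs <;> omega

lemma P_top (hn : 1 ≤ n) (σ : Equiv.Perm (Fin n)) : ¬ P σ (n - 1) := by
  rintro ⟨h, -⟩; omega

lemma b_top (hn : 1 ≤ n) (σ : Equiv.Perm (Fin n)) : b σ n = b σ (n - 1) := by
  have h : n = (n - 1) + 1 := by omega
  have h2 : b σ n = b σ ((n - 1) + 1) := congrArg (b σ) h
  rw [h2, b_succ, if_neg (P_top hn σ)]; simp

lemma d_le (hn : 1 ≤ n) (σ : Equiv.Perm (Fin n)) : b σ n ≤ n - 1 :=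
  (b_top hn σ) ▸ b_le σ (n - 1)

lemma descentCount_eq (σ : Equiv.Perm (Fin n)) : descentCount σ = b σ n := by
  classical
  rw [descentCount, Nat.card_eq_fintype_card, Fintype.card_subtype, b,
    ← Finset.card_image_of_injective _ Fin.val_injective]
  congr 1
  ext m
  simp only [Finset.mem_image, Finset.mem_filter, Finset.mem_univ, true_and, Finset.mem_range]
  constructor
  · rintro ⟨i, ⟨h, hlt⟩, rfl⟩
    exact ⟨Nat.lt_of_succ_lt h, h, by simpa using hlt⟩
  · rintro ⟨hm, h, hlt⟩
    exact ⟨⟨m, Nat.lt_of_succ_lt h⟩, ⟨h, by simpa using hlt⟩, rfl⟩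

/-- adjacent strict increase implies `StrictMono` for tuples. -/
lemma strictMono_of_adj {m : ℕ} {β : Type*} [Preorder β] {f : Fin m → β}
    (h : ∀ (j : ℕ) (hj : j + 1 < m), f ⟨j, Nat.lt_of_succ_lt hj⟩ < f ⟨j + 1, hj⟩) :
    StrictMono f := by
  cases m with
  | zero => intro i; exact i.elim0
  | succ m =>
    rw [Fin.strictMono_iff_lt_succ]
    intro i
    have := h i.1 (Nat.succ_lt_succ i.2)
    convert this using 2 <;> exact Fin.ext rfl

lemma monotone_of_adj {m : ℕ} {β : Type*} [Preorder β] {f : Fin m → β}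
    (h : ∀ (j : ℕ) (hj : j + 1 < m), f ⟨j, Nat.lt_of_succ_lt hj⟩ ≤ f ⟨j + 1, hj⟩) :
    Monotone f := by
  cases m with
  | zero => intro i; exact i.elim0
  | succ m =>
    rw [Fin.monotone_iff_le_succ]
    intro i
    have := h i.1 (Nat.succ_lt_succ i.2)
    convert this using 2 <;> exact Fin.ext rfl

lemma strictMono_gap {m M : ℕ} {H : Fin m → Fin M} (hs : StrictMono H) :
    ∀ (c : ℕ) (i j : Fin m), (j : ℕ) = (i : ℕ) + c → (H i : ℕ) + c ≤ (H j : ℕ) := by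
  intro c
  induction c with
  | zero =>
    intro i j hij
    have : i = j := Fin.ext (by omega)
    subst this; simp
  | succ c ih =>
    intro i j hij
    have hmid : (i : ℕ) + c < m := by have := j.2; omega
    have h1 := ih i ⟨(i : ℕ) + c, hmid⟩ rfl
    have h2 : H ⟨(i : ℕ) + c, hmid⟩ < H j := hs (by rw [Fin.lt_def]; simp; omega)
    rw [Fin.lt_def] at h2
    omega

lemma strictMono_le_apply {m M : ℕ} {H : Fin m → Fin M} (hs : StrictMono H) (j : Fin m) :
    (j : ℕ) ≤ (H j : ℕ) := by
  have := strictMono_gap hs (j : ℕ) ⟨0, j.pos⟩ j (by simp)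
  omega

/-- The condition characterizing the fiber of `Tuple.sort` over `σ`, in terms of `h = f ∘ σ`. -/
def cond (σ : Equiv.Perm (Fin n)) (h : Fin n → Fin (k + 1)) : Prop :=
  Monotone h ∧ ∀ (j : ℕ) (hj : j + 1 < n),
    σ ⟨j + 1, hj⟩ < σ ⟨j, Nat.lt_of_succ_lt hj⟩ →
      h ⟨j, Nat.lt_of_succ_lt hj⟩ < h ⟨j + 1, hj⟩

lemma cond_iff (σ : Equiv.Perm (Fin n)) (h : Fin n → Fin (k + 1)) :
    (Monotone h ∧ ∀ i j, i < j → h i = h j → σ i < σ j) ↔ cond σ h := by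
  constructor
  · rintro ⟨hm, htie⟩
    refine ⟨hm, fun j hj hdesc => ?_⟩
    have hlt : (⟨j, Nat.lt_of_succ_lt hj⟩ : Fin n) < ⟨j + 1, hj⟩ :=
      Fin.mk_lt_mk.2 (by omega)
    refine lt_of_le_of_ne (hm hlt.le) fun he => ?_
    exact absurd (htie _ _ hlt he) (asymm hdesc)
  · rintro ⟨hm, hadj⟩
    refine ⟨hm, ?_⟩
    have adj : ∀ i j : Fin n, (j : ℕ) = (i : ℕ) + 1 → h i = h j → σ i < σ j := by
      intro i j hij he
      have hlt : i < j := by rw [Fin.lt_def]; omega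
      have hne : σ i ≠ σ j := fun e => (Fin.ne_of_lt hlt) (σ.injective e)
      rcases lt_or_gt_of_ne hne with hl | hg
      · exact hl
    -- `hg : σ j < σ i` contradicts `h i = h j` via `hadj`
      · exfalso
        have hj1 : (i : ℕ) + 1 < n := by have := j.2; omega
        have hieq : (⟨(i : ℕ), Nat.lt_of_succ_lt hj1⟩ : Fin n) = i := Fin.ext rfl
        have hjeq : (⟨(i : ℕ) + 1, hj1⟩ : Fin n) = j := Fin.ext (by simp only [Fin.val_mk]; omega)
        have := hadj (i : ℕ) hj1 (by rw [hieq, hjeq]; exact hg)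
        rw [hieq, hjeq, he] at this
        exact lt_irrefl _ this
    have aux : ∀ c : ℕ, ∀ i j : Fin n, (j : ℕ) = (i : ℕ) + c + 1 → h i = h j → σ i < σ j := by
      intro c
      induction c with
      | zero => intro i j hij he; exact adj i j (by omega) he
      | succ c ih =>
        intro i j hij he
        have hmidlt : (i : ℕ) + c + 1 < n := by have := j.2; omega
        set mid : Fin n := ⟨(i : ℕ) + c + 1, hmidlt⟩ with hmid
        have h1 : h i ≤ h mid := hm (by rw [Fin.le_def]; simp [hmid]; omega)
        have h2 : h mid ≤ h j := hm (by rw [Fin.le_def]; simp [hmid]; omega)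
        have he1 : h i = h mid := le_antisymm h1 (he ▸ h2)
        have he2 : h mid = h j := le_antisymm h2 (he ▸ h1)
        exact lt_trans (ih i mid (by simp [hmid]) he1) (adj mid j (by simp [hmid]; omega) he2)
    intro i j hlt he
    exact aux ((j : ℕ) - (i : ℕ) - 1) i j (by rw [Fin.lt_def] at hlt; omega) he

lemma sort_eq_iff (σ : Equiv.Perm (Fin n)) (f : Fin n → Fin (k + 1)) :
    Tuple.sort f = σ ↔ cond σ (f ∘ σ) := by
  rw [eq_comm, Tuple.eq_sort_iff]
  exact cond_iff σ (f ∘ σ)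

/-- The equivalence between the fiber of `Tuple.sort` over `σ` and monotone tuples that are
strict at descents of `σ`. -/
noncomputable def sortEquiv (σ : Equiv.Perm (Fin n)) :
    {f : Fin n → Fin (k + 1) // Tuple.sort f = σ} ≃ {h : Fin n → Fin (k + 1) // cond σ h} where
  toFun f := ⟨f.1 ∘ σ, (sort_eq_iff σ f.1).mp f.2⟩
  invFun h := ⟨h.1 ∘ σ.symm, by
    rw [sort_eq_iff]
    have : (h.1 ∘ ⇑σ.symm) ∘ ⇑σ = h.1 := by funext x; simp
    rw [this]; exact h.2⟩
  left_inv f := by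
    apply Subtype.ext
    funext x; simp
  right_inv h := by
    apply Subtype.ext
    funext x; simp

/-- The equivalence between monotone-with-strict-descents tuples and strictly monotone tuples. -/
noncomputable def condEquiv (hn : 1 ≤ n) (σ : Equiv.Perm (Fin n)) :
    {h : Fin n → Fin (k + 1) // cond σ h} ≃
      {H : Fin n → Fin (k + n - b σ n) // StrictMono H} where
  toFun h := ⟨fun j => ⟨(h.1 j : ℕ) + ((j : ℕ) - b σ (j : ℕ)), by
      have hb1 : b σ n ≤ b σ (j : ℕ) + ((n - 1) - (j : ℕ)) := by
        have h1 : b σ ((j : ℕ) + ((n - 1) - (j : ℕ))) ≤ b σ (j : ℕ) + ((n - 1) - (j : ℕ)) :=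
          b_gap σ _ _
        have h2 : (j : ℕ) + ((n - 1) - (j : ℕ)) = n - 1 := by have := j.2; omega
        rw [h2] at h1
        rw [b_top hn σ]
        exact h1
      have hb2 : b σ (j : ℕ) ≤ (j : ℕ) := b_le σ _
      have hb3 : b σ n ≤ n - 1 := d_le hn σ
      have hj := j.2
      have hh := (h.1 j).2
      omega⟩, by
    apply strictMono_of_adj
    intro j hj
    rw [Fin.mk_lt_mk]
    have hbs := b_succ σ j
    have hb2 : b σ j ≤ j := b_le σ _
    by_cases hp : P σ j
    · obtain ⟨hw, hdesc⟩ := hp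
      have hstrict := h.2.2 j hj (by
        have : σ ⟨j + 1, hw⟩ = σ ⟨j + 1, hj⟩ := rfl
        exact hdesc)
      rw [Fin.lt_def] at hstrict
      rw [if_pos ⟨hw, hdesc⟩] at hbs
      simp only [Fin.val_mk] at *
      omega
    · have hmono : h.1 ⟨j, Nat.lt_of_succ_lt hj⟩ ≤ h.1 ⟨j + 1, hj⟩ :=
        h.2.1 (by simp [Fin.le_def])
      rw [Fin.le_def] at hmono
      rw [if_neg hp] at hbs
      simp only [Fin.val_mk] at *
      omega⟩
  invFun H := ⟨fun j => ⟨(H.1 j : ℕ) - ((j : ℕ) - b σ (j : ℕ)), by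
      have hle := strictMono_le_apply H.2 j
      have hgap : (H.1 j : ℕ) + ((n - 1) - (j : ℕ)) ≤ (H.1 ⟨n - 1, by omega⟩ : ℕ) :=
        strictMono_gap H.2 _ j ⟨n - 1, by omega⟩ (by simp; have := j.2; omega)
      have htop := (H.1 ⟨n - 1, by omega⟩).2
      have hb2 : b σ (j : ℕ) ≤ (j : ℕ) := b_le σ _
      have hb4 : b σ (j : ℕ) ≤ b σ n := b_mono σ (le_of_lt j.2)
      have hb3 : b σ n ≤ n - 1 := d_le hn σ
      have hj := j.2
      omega⟩, by
    constructor
    · apply monotone_of_adj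
      intro j hj
      rw [Fin.mk_le_mk]
      have hbs := b_succ σ j
      have hb2 : b σ j ≤ j := b_le σ _
      have hadj : H.1 ⟨j, Nat.lt_of_succ_lt hj⟩ < H.1 ⟨j + 1, hj⟩ :=
        H.2 (by rw [Fin.lt_def]; simp)
      rw [Fin.lt_def] at hadj
      have hle := strictMono_le_apply H.2 ⟨j, Nat.lt_of_succ_lt hj⟩
      split_ifs at hbs <;> (simp only [Fin.val_mk] at *; omega)
    · intro j hj hdesc
      rw [Fin.mk_lt_mk]
      have hbs := b_succ σ j
      rw [if_pos ⟨hj, hdesc⟩] at hbs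
      have hb2 : b σ j ≤ j := b_le σ _
      have hadj : H.1 ⟨j, Nat.lt_of_succ_lt hj⟩ < H.1 ⟨j + 1, hj⟩ :=
        H.2 (by rw [Fin.lt_def]; simp)
      rw [Fin.lt_def] at hadj
      have hle := strictMono_le_apply H.2 ⟨j, Nat.lt_of_succ_lt hj⟩
      simp only [Fin.val_mk] at *
      omega⟩
  left_inv h := by
    apply Subtype.ext
    funext j
    apply Fin.ext
    simp only [Fin.val_mk]
    omega
  right_inv H := by
    apply Subtype.ext
    funext j
    apply Fin.ext
    simp only [Fin.val_mk]
    have hle := strictMono_le_apply H.2 j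
    have hb2 : b σ (j : ℕ) ≤ (j : ℕ) := b_le σ _
    omega

/-- The equivalence between strictly monotone tuples and subsets. -/
noncomputable def strictMonoEquiv (N m : ℕ) :
    {H : Fin N → Fin m // StrictMono H} ≃ {s : Finset (Fin m) // s.card = N} where
  toFun H := ⟨Finset.univ.image H.1, by
    rw [Finset.card_image_of_injective _ H.2.injective, Finset.card_univ, Fintype.card_fin]⟩
  invFun s := ⟨⇑(s.1.orderEmbOfFin s.2), (s.1.orderEmbOfFin s.2).strictMono⟩
  left_inv H := by
    apply Subtype.ext
    exact (Finset.orderEmbOfFin_unique _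
      (fun x => Finset.mem_image_of_mem _ (Finset.mem_univ x)) H.2).symm
  right_inv s := by
    apply Subtype.ext
    rw [← Finset.coe_inj, Finset.coe_image, Finset.coe_univ, Set.image_univ]
    exact Finset.range_orderEmbOfFin s.1 s.2

lemma card_strictMono (N m : ℕ) :
    Nat.card {H : Fin N → Fin m // StrictMono H} = m.choose N := by
  classical
  rw [Nat.card_congr (strictMonoEquiv N m), Nat.card_eq_fintype_card]
  simpa using Fintype.card_finset_len (α := Fin m) N

lemma card_fiber (hn : 1 ≤ n) (σ : Equiv.Perm (Fin n)) :
    Nat.card {f : Fin n → Fin (k + 1) // Tuple.sort f = σ} =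
      (k + n - descentCount σ).choose n := by
  rw [descentCount_eq, Nat.card_congr (sortEquiv σ), Nat.card_congr (condEquiv hn σ),
    card_strictMono]

end WorpitzkyAux

/-- Worpitzky's identity. -/
theorem worpitzky (n k : ℕ) (hn : 1 ≤ n) :
    (k + 1) ^ n = ∑ i ∈ Finset.range n, eulerian n i * (k + n - i).choose n := by
  classical
  open WorpitzkyAux in
  have h0 : (k + 1) ^ n =
      ∑ σ : Equiv.Perm (Fin n), Nat.card {f : Fin n → Fin (k + 1) // Tuple.sort f = σ} := by
    have hc := Fintype.card_congr
      (Equiv.sigmaFiberEquiv (fun f : Fin n → Fin (k + 1) => Tuple.sort f))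
    rw [Fintype.card_sigma] at hc
    simp only [Nat.card_eq_fintype_card]
    rw [hc]
    simp
  rw [h0]
  have hmaps : ∀ σ : Equiv.Perm (Fin n), σ ∈ Finset.univ →
      descentCount σ ∈ Finset.range n := by
    intro σ _
    rw [Finset.mem_range, WorpitzkyAux.descentCount_eq]
    have := WorpitzkyAux.d_le hn σ
    omega
  calc ∑ σ : Equiv.Perm (Fin n), Nat.card {f : Fin n → Fin (k + 1) // Tuple.sort f = σ}
      = ∑ σ : Equiv.Perm (Fin n), (k + n - descentCount σ).choose n :=
        Finset.sum_congr rfl fun σ _ => WorpitzkyAux.card_fiber hn σ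
    _ = ∑ i ∈ Finset.range n, ∑ σ ∈ Finset.univ.filter (fun σ => descentCount σ = i),
          (k + n - descentCount σ).choose n :=
        (Finset.sum_fiberwise_of_maps_to hmaps _).symm
    _ = ∑ i ∈ Finset.range n, eulerian n i * (k + n - i).choose n := by
        refine Finset.sum_congr rfl fun i _ => ?_
        rw [Finset.sum_congr rfl (fun σ hσ => by rw [(Finset.mem_filter.1 hσ).2]),
          Finset.sum_const, smul_eq_mul]
        congr 1
        rw [eulerian, Nat.card_eq_fintype_card, Fintype.card_subtype]
end

section
/- Let P be a partial order on {1,…,n} and let k ≥ 0 be an integer. Then the number of linear extensions of P with exactly k descents equals Σ_{i=0}^{k} (−1)^i · C(n+1, i) · Ω_P(k−i), where C(a,b) denotes the binomial coefficient. -/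
open Finset PowerSeries



/-- `f` is a `P`-partition for the partial order `P`: for `i ≺_P j`,
`f i ≤ f j` if `i < j` in the natural order, and `f i < f j` if `i > j`. -/
def IsPPartition {n : ℕ} (P : PartialOrder (Fin n)) (f : Fin n → ℕ) : Prop :=
  ∀ i j : Fin n, P.lt i j → ((i < j → f i ≤ f j) ∧ (j < i → f i < f j))

/-- `Ω_P(k)`: the number of `P`-partitions with all values at most `k`. -/
noncomputable def orderPoly {n : ℕ} (P : PartialOrder (Fin n)) (k : ℕ) : ℕ :=
  Nat.card {f : Fin n → ℕ // IsPPartition P f ∧ ∀ x, f x ≤ k}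

/-- `π` is a linear extension of the partial order `P`: `i ≺_P j` implies
`i` appears before `j` in the word `π(0) π(1) ⋯ π(n-1)`. -/
def IsLinearExtension {n : ℕ} (P : PartialOrder (Fin n)) (π : Equiv.Perm (Fin n)) : Prop :=
  ∀ i j : Fin n, P.lt i j → π.symm i < π.symm j

/-- `f` is `π`-compatible: `f (π 0) ≤ f (π 1) ≤ ⋯`, with strict inequality
at every descent of `π`. -/
def PiCompatible {n : ℕ} (π : Equiv.Perm (Fin n)) (f : Fin n → ℕ) : Prop :=
  ∀ (i : Fin n) (h : (i : ℕ) + 1 < n),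
    f (π i) ≤ f (π ⟨(i : ℕ) + 1, h⟩) ∧
      (π ⟨(i : ℕ) + 1, h⟩ < π i → f (π i) < f (π ⟨(i : ℕ) + 1, h⟩))

open Finset PowerSeries

lemma coeff_one_sub_X_pow (N i : ℕ) :
    (PowerSeries.coeff i) ((1 - PowerSeries.X) ^ N) = (-1 : ℤ) ^ i * (N.choose i : ℤ) := by
  have h : (1 - PowerSeries.X : ℤ⟦X⟧) ^ N = ∑ j ∈ range (N + 1),
      PowerSeries.C ((-1 : ℤ) ^ j * (N.choose j : ℤ)) * PowerSeries.X ^ j := by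
    rw [sub_eq_add_neg, add_comm, add_pow]
    apply Finset.sum_congr rfl
    intro j hj
    rw [neg_pow]
    simp only [map_mul, map_pow, map_one, map_neg, map_natCast]
    ring
  rw [h, map_sum]
  simp only [PowerSeries.coeff_C_mul, PowerSeries.coeff_X_pow]
  by_cases hi : i < N + 1
  · rw [Finset.sum_eq_single i]
    · simp
    · intro b _ hb; simp [Ne.symm hb]
    · intro h'; exact absurd (Finset.mem_range.2 hi) h'
  · push_neg at hi
    rw [Finset.sum_eq_zero, Nat.choose_eq_zero_of_lt (by omega), Nat.cast_zero, mul_zero]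
    intro b hb
    have : b ≠ i := by have := Finset.mem_range.1 hb; omega
    simp [Ne.symm this]

lemma alt_sum_key (n m : ℕ) :
    ∑ i ∈ range (m + 1), (-1 : ℤ) ^ i * ((n + 1).choose i : ℤ) * ((n + (m - i)).choose n : ℤ)
      = if m = 0 then 1 else 0 := by
  have h := congrArg (PowerSeries.coeff m)
    ((PowerSeries.invOneSubPow ℤ (n + 1)).inv_val)
  rw [PowerSeries.invOneSubPow_inv_eq_one_sub_pow] at h
  rw [PowerSeries.coeff_mul, Finset.Nat.sum_antidiagonal_eq_sum_range_succ_mk] at h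
  simp only [PowerSeries.invOneSubPow_val_succ_eq_mk_add_choose, PowerSeries.coeff_mk,
    coeff_one_sub_X_pow, PowerSeries.coeff_one] at h
  exact h

lemma strictMono_fin_gap {N n : ℕ} {g : Fin n → Fin N} (hg : StrictMono g) :
    ∀ (d a : ℕ) (h : a + d < n), (g ⟨a, by omega⟩ : ℕ) + d ≤ (g ⟨a + d, h⟩ : ℕ) := by
  intro d
  induction d with
  | zero => intro a h; simp
  | succ d ih =>
    intro a h
    have h1 := ih a (by omega)
    have h2 : g ⟨a + d, by omega⟩ < g ⟨a + d + 1, by omega⟩ := hg (by simp [Fin.lt_def])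
    rw [Fin.lt_def] at h2
    have : a + (d + 1) = a + d + 1 := by omega
    simp_rw [this]
    omega

lemma card_monotone_bounded (n m : ℕ) :
    Nat.card {e : Fin n → ℕ // Monotone e ∧ ∀ x, e x ≤ m} = (m + n).choose n := by
  classical
  have inj : ∀ (e : {e : Fin n → ℕ // Monotone e ∧ ∀ x, e x ≤ m}),
      Function.Injective (fun i : Fin n => (⟨e.1 i + i, by
        have := e.2.2 i; have := i.isLt; omega⟩ : Fin (m + n))) := by
    intro e a b hab
    simp only [Fin.mk.injEq] at hab
    rcases lt_trichotomy a b with h | h | h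
    · have := e.2.1 h.le; have : (a : ℕ) < b := h; omega
    · exact h
    · have := e.2.1 h.le; have : (b : ℕ) < a := h; omega
  have key : Nat.card {e : Fin n → ℕ // Monotone e ∧ ∀ x, e x ≤ m}
      = Nat.card {s : Finset (Fin (m + n)) // s.card = n} := by
    apply Nat.card_eq_of_bijective
      (f := fun e => ⟨(Finset.univ.image (fun i : Fin n => (⟨e.1 i + i, by
        have := e.2.2 i; have := i.isLt; omega⟩ : Fin (m + n)))), by
        rw [Finset.card_image_of_injective _ (inj e), Finset.card_univ, Fintype.card_fin]⟩)
    constructor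
    · intro a b hab
      simp only [Subtype.mk.injEq] at hab
      set ga := fun i : Fin n => (⟨a.1 i + i, by
        have := a.2.2 i; have := i.isLt; omega⟩ : Fin (m + n)) with hga
      set gb := fun i : Fin n => (⟨b.1 i + i, by
        have := b.2.2 i; have := i.isLt; omega⟩ : Fin (m + n)) with hgb
      have hsa : StrictMono ga := by
        intro x y hxy
        have := a.2.1 hxy.le
        have hxy' : (x : ℕ) < y := hxy
        simp only [hga, Fin.mk_lt_mk]
        omega
      have hsb : StrictMono gb := by
        intro x y hxy
        have := b.2.1 hxy.le
        have hxy' : (x : ℕ) < y := hxy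
        simp only [hgb, Fin.mk_lt_mk]
        omega
      have hcard : (Finset.univ.image ga).card = n := by
        rw [Finset.card_image_of_injective _ (inj a), Finset.card_univ, Fintype.card_fin]
      have ha' : ga = (Finset.univ.image ga).orderEmbOfFin hcard :=
        Finset.orderEmbOfFin_unique hcard (fun x => Finset.mem_image_of_mem _ (mem_univ x)) hsa
      have hb' : gb = (Finset.univ.image ga).orderEmbOfFin hcard := by
        apply Finset.orderEmbOfFin_unique hcard ?_ hsb
        intro x
        rw [hab]
        exact Finset.mem_image_of_mem _ (mem_univ x)
      apply Subtype.ext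
      funext i
      have : ga i = gb i := by rw [ha', hb']
      simp only [hga, hgb, Fin.mk.injEq] at this
      omega
    · rintro ⟨s, hs⟩
      set g := s.orderEmbOfFin hs with hg
      have gap := strictMono_fin_gap g.strictMono
      have hle : ∀ i : Fin n, (i : ℕ) ≤ (g i : ℕ) := by
        intro i
        have h1 := gap i 0 (by simpa using i.isLt)
        have h0 : (⟨0 + (i : ℕ), by simpa using i.isLt⟩ : Fin n) = i := by
          apply Fin.ext; simp
        rw [h0] at h1
        omega
      refine ⟨⟨fun i => (g i : ℕ) - i, ?_, ?_⟩, ?_⟩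
      · intro a b hab
        rcases eq_or_lt_of_le hab with h | h
        · rw [h]
        · have hab' : (a : ℕ) + ((b : ℕ) - a) < n := by
            have := b.isLt; have : (a:ℕ) < b := h; omega
          have h1 := gap ((b : ℕ) - a) a hab'
          have ha : (⟨(a : ℕ), by omega⟩ : Fin n) = a := rfl
          have hb : (⟨(a : ℕ) + ((b:ℕ) - a), hab'⟩ : Fin n) = b := by
            apply Fin.ext; simp; have : (a:ℕ) < b := h; omega
          rw [ha, hb] at h1
          have := hle a
          show (g a : ℕ) - a ≤ (g b : ℕ) - b
          omega
      · intro i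
        show (g i : ℕ) - i ≤ m
        have hpos : 0 < n := i.pos
        have h1 := gap (n - 1 - i) i (by omega)
        have h2 := (g ⟨(i : ℕ) + (n - 1 - (i : ℕ)), by omega⟩).isLt
        simp only [Fin.eta] at h1
        omega
      · apply Subtype.ext
        simp only
        have himg : (fun i : Fin n => (⟨(g i : ℕ) - i + i, by
            have := (g i).isLt; have := hle i; omega⟩ : Fin (m + n))) = g := by
          funext i
          apply Fin.ext
          simp only
          have := hle i
          omega
        rw [himg]
        apply Finset.coe_injective
        rw [Finset.coe_image, Finset.coe_univ, Set.image_univ]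
        exact Finset.range_orderEmbOfFin s hs
  rw [key, Nat.card_eq_fintype_card, Fintype.card_finset_len, Fintype.card_fin]

open scoped Classical in
noncomputable def descSet {n : ℕ} (π : Equiv.Perm (Fin n)) : Finset (Fin n) :=
  Finset.univ.filter (fun i => ∃ h : (i : ℕ) + 1 < n, π ⟨(i : ℕ) + 1, h⟩ < π i)

lemma mem_descSet {n : ℕ} (π : Equiv.Perm (Fin n)) (i : Fin n) :
    i ∈ descSet π ↔ ∃ h : (i : ℕ) + 1 < n, π ⟨(i : ℕ) + 1, h⟩ < π i := by
  classical
  simp [descSet]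

lemma descentCount_eq {n : ℕ} (π : Equiv.Perm (Fin n)) :
    descentCount π = (descSet π).card := by
  classical
  rw [descentCount, Nat.card_eq_fintype_card, Fintype.card_subtype]
  congr 1

noncomputable def csum {n : ℕ} (π : Equiv.Perm (Fin n)) (i : Fin n) : ℕ :=
  ((descSet π).filter (fun j : Fin n => (j : ℕ) < (i : ℕ))).card

lemma csum_zero {n : ℕ} (π : Equiv.Perm (Fin n)) (h0 : 0 < n) : csum π ⟨0, h0⟩ = 0 := by
  rw [csum, Finset.card_eq_zero, Finset.filter_eq_empty_iff]
  intro j _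
  simp

lemma csum_mono {n : ℕ} (π : Equiv.Perm (Fin n)) {a b : Fin n} (hab : a ≤ b) :
    csum π a ≤ csum π b := by
  apply Finset.card_le_card
  apply Finset.monotone_filter_right
  intro j _ hj
  have h1 : (a : ℕ) ≤ b := hab
  exact lt_of_lt_of_le hj (by exact_mod_cast h1)

lemma csum_le {n : ℕ} (π : Equiv.Perm (Fin n)) (i : Fin n) :
    csum π i ≤ (descSet π).card :=
  Finset.card_le_card (Finset.filter_subset _ _)

lemma csum_succ {n : ℕ} (π : Equiv.Perm (Fin n)) (i : ℕ) (h : i + 1 < n) :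
    csum π ⟨i + 1, h⟩ =
      csum π ⟨i, by omega⟩ + (if (⟨i, by omega⟩ : Fin n) ∈ descSet π then 1 else 0) := by
  classical
  rw [csum, csum]
  have hsplit : (descSet π).filter (fun j : Fin n => (j : ℕ) < i + 1)
      = (descSet π).filter (fun j : Fin n => (j : ℕ) < i) ∪
        (descSet π).filter (fun j : Fin n => j = (⟨i, by omega⟩ : Fin n)) := by
    rw [← Finset.filter_or]
    apply Finset.filter_congr
    intro j _
    constructor
    · intro hj
      rcases Nat.lt_or_ge (j : ℕ) i with h' | h'
      · exact Or.inl h'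
      · right; apply Fin.ext; simp; omega
    · rintro (hj | rfl)
      · omega
      · simp
  have hdisj : Disjoint ((descSet π).filter (fun j : Fin n => (j : ℕ) < i))
      ((descSet π).filter (fun j : Fin n => j = (⟨i, by omega⟩ : Fin n))) := by
    rw [Finset.disjoint_filter]
    rintro j _ hj rfl
    simp at hj
  rw [hsplit, Finset.card_union_of_disjoint hdisj, Finset.filter_eq']
  split <;> simp

lemma csum_last {n : ℕ} (π : Equiv.Perm (Fin n)) (h0 : 0 < n) :
    csum π ⟨n - 1, by omega⟩ = (descSet π).card := by
  rw [csum]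
  congr 1
  apply Finset.filter_true_of_mem
  intro j hj
  rw [mem_descSet] at hj
  obtain ⟨h, -⟩ := hj
  simp
  omega

section Compat

variable {n : ℕ} (π : Equiv.Perm (Fin n)) (f : Fin n → ℕ)

lemma T_strictMono {π : Equiv.Perm (Fin n)} {f : Fin n → ℕ} (hf : PiCompatible π f) :
    StrictMono (fun i : Fin n => f (π i) * n + (π i : ℕ)) := by
  rcases n with - | m
  · exact fun a => a.elim0
  · rw [Fin.strictMono_iff_lt_succ]
    intro i
    have hlt : (↑(Fin.castSucc i) : ℕ) + 1 < m + 1 := by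
      simpa using i.isLt
    have hc := hf (Fin.castSucc i) hlt
    have hsucc : (⟨(↑(Fin.castSucc i) : ℕ) + 1, hlt⟩ : Fin (m + 1)) = Fin.succ i := by
      apply Fin.ext; simp
    rw [hsucc] at hc
    have hπlt : (π (Fin.succ i) : ℕ) < m + 1 := (π _).isLt
    rcases lt_or_ge (π (Fin.succ i)) (π (Fin.castSucc i)) with hd | hd
    · have h1 := hc.2 hd
      have h2 : (π (Fin.castSucc i) : ℕ) < m + 1 := (π _).isLt
      have h4 : (f (π (Fin.castSucc i)) + 1) * (m + 1) ≤ f (π (Fin.succ i)) * (m + 1) :=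
        Nat.mul_le_mul_right _ (Nat.succ_le_of_lt h1)
      show f (π (Fin.castSucc i)) * (m + 1) + (π (Fin.castSucc i) : ℕ) <
        f (π (Fin.succ i)) * (m + 1) + (π (Fin.succ i) : ℕ)
      nlinarith [h1, h2, h4]
    · have h1 := hc.1
      have hne : π (Fin.castSucc i) ≠ π (Fin.succ i) := by
        intro h
        have := π.injective h
        have h2 : (Fin.castSucc i : Fin (m+1)) ≠ Fin.succ i := by
          intro hh
          have := congrArg Fin.val hh
          simp at this
        exact h2 this
      have h3 : (π (Fin.castSucc i) : ℕ) < π (Fin.succ i) := by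
        rcases lt_or_eq_of_le hd with h' | h'
        · exact h'
        · exact absurd h' hne
      show f (π (Fin.castSucc i)) * (m + 1) + (π (Fin.castSucc i) : ℕ) <
        f (π (Fin.succ i)) * (m + 1) + (π (Fin.succ i) : ℕ)
      nlinarith [h1, h3]

lemma compat_iff_sort : PiCompatible π f ↔ π = Tuple.sort f := by
  rw [Tuple.eq_sort_iff]
  constructor
  · intro hf
    have hT := T_strictMono hf
    constructor
    · intro a b hab
      rcases eq_or_lt_of_le hab with rfl | h
      · exact le_refl _
      · have h0 := hT h
        replace h0 : f (π a) * n + (π a : ℕ) < f (π b) * n + (π b : ℕ) := h0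
        have hπb : (π b : ℕ) < n := (π b).isLt
        have hπa : (π a : ℕ) < n := (π a).isLt
        show f (π a) ≤ f (π b)
        nlinarith [h0, hπa, hπb]
    · intro i j hij hfij
      have h0 := hT hij
      replace h0 : f (π i) * n + (π i : ℕ) < f (π j) * n + (π j : ℕ) := h0
      rw [hfij] at h0
      have : (π i : ℕ) < (π j : ℕ) := by omega
      exact this
  · rintro ⟨hmono, htie⟩
    intro i h
    have hle : i ≤ (⟨(i : ℕ) + 1, h⟩ : Fin n) := by
      rw [Fin.le_def]; simp
    have hlt : i < (⟨(i : ℕ) + 1, h⟩ : Fin n) := by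
      rw [Fin.lt_def]; simp
    refine ⟨hmono hle, ?_⟩
    intro hd
    rcases lt_or_eq_of_le (hmono hle) with h' | h'
    · exact h'
    · have := htie i _ hlt h'
      exact absurd hd (not_lt.mpr this.le)

lemma compat_sort : PiCompatible (Tuple.sort f) f := by
  rw [compat_iff_sort]

end Compat

lemma csum_succ' {n : ℕ} (π : Equiv.Perm (Fin n)) (i : Fin n) (h : (i : ℕ) + 1 < n) :
    csum π ⟨(i : ℕ) + 1, h⟩ = csum π i + if i ∈ descSet π then 1 else 0 := by
  have := csum_succ π (i : ℕ) h
  simpa [Fin.eta] using this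

lemma compat_F_mono {n : ℕ} {π : Equiv.Perm (Fin n)} {f : Fin n → ℕ}
    (hf : PiCompatible π f) : Monotone (fun i : Fin n =>
      (f (π i) : ℤ) - (csum π i : ℤ)) := by
  rcases n with - | m
  · exact fun a => a.elim0
  · rw [Fin.monotone_iff_le_succ]
    intro i
    have hlt : (↑(Fin.castSucc i) : ℕ) + 1 < m + 1 := by simpa using i.isLt
    have hsucc' : ∀ (hh : (↑(Fin.castSucc i) : ℕ) + 1 < m + 1),
        (⟨(↑(Fin.castSucc i) : ℕ) + 1, hh⟩ : Fin (m + 1)) = Fin.succ i := fun hh => by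
      apply Fin.ext; simp
    have hc := hf (Fin.castSucc i) hlt
    rw [hsucc' hlt] at hc
    have hcs := csum_succ' π (Fin.castSucc i) hlt
    rw [hsucc' hlt] at hcs
    show (f (π (Fin.castSucc i)) : ℤ) - (csum π (Fin.castSucc i) : ℤ) ≤
      (f (π (Fin.succ i)) : ℤ) - (csum π (Fin.succ i) : ℤ)
    by_cases hmem : Fin.castSucc i ∈ descSet π
    · obtain ⟨hh, hdlt⟩ := (mem_descSet π _).mp hmem
      rw [hsucc' hh] at hdlt
      have h1 := hc.2 hdlt
      rw [hcs, if_pos hmem]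
      push_cast
      omega
    · have h1 := hc.1
      rw [hcs, if_neg hmem]
      push_cast
      omega

lemma card_compat {n : ℕ} (hn : 1 ≤ n) (π : Equiv.Perm (Fin n)) (k : ℕ) :
    Nat.card {f : Fin n → ℕ // PiCompatible π f ∧ ∀ x, f x ≤ k} =
      if (descSet π).card ≤ k then (k - (descSet π).card + n).choose n else 0 := by
  set d := (descSet π).card with hd
  have key : ∀ (f : Fin n → ℕ), PiCompatible π f → (∀ x, f x ≤ k) →
      (∀ i : Fin n, csum π i ≤ f (π i)) ∧ (∀ i : Fin n, f (π i) + d ≤ k + csum π i) := by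
    intro f hc hb
    have hmono := compat_F_mono hc
    have h0 : ∀ i : Fin n, (⟨0, hn⟩ : Fin n) ≤ i := fun i => by
      rw [Fin.le_def]; simp
    have hlast : ∀ i : Fin n, i ≤ ⟨n - 1, by omega⟩ := fun i => by
      rw [Fin.le_def]; simp; have := i.isLt; omega
    constructor
    · intro i
      have h1 := hmono (h0 i)
      replace h1 : (f (π ⟨0, hn⟩) : ℤ) - (csum π ⟨0, hn⟩ : ℤ) ≤
        (f (π i) : ℤ) - (csum π i : ℤ) := h1
      rw [csum_zero π hn] at h1
      have h2 : (0 : ℕ) ≤ f (π ⟨0, hn⟩) := Nat.zero_le _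
      push_cast at h1
      omega
    · intro i
      have h1 := hmono (hlast i)
      replace h1 : (f (π i) : ℤ) - (csum π i : ℤ) ≤
        (f (π ⟨n - 1, by omega⟩) : ℤ) - (csum π ⟨n - 1, by omega⟩ : ℤ) := h1
      rw [csum_last π hn] at h1
      have h2 : f (π ⟨n - 1, by omega⟩) ≤ k := hb _
      push_cast at h1
      omega
  by_cases hdk : d ≤ k
  · rw [if_pos hdk, ← card_monotone_bounded n (k - d)]
    apply Nat.card_congr
    refine ⟨fun F => ⟨fun i => F.1 (π i) - csum π i, ?_, ?_⟩,
      fun E => ⟨fun x => E.1 (π.symm x) + csum π (π.symm x), ?_, ?_⟩, ?_, ?_⟩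
    · -- monotone
      obtain ⟨f, hc, hb⟩ := F
      intro a b hab
      have h1 := compat_F_mono hc hab
      have h2 := (key f hc hb).1 a
      have h3 := (key f hc hb).1 b
      simp only at h1 ⊢
      push_cast at h1
      omega
    · -- bounded by k - d
      obtain ⟨f, hc, hb⟩ := F
      intro i
      have h2 := (key f hc hb).1 i
      have h3 := (key f hc hb).2 i
      have h4 := csum_le π i
      simp only
      omega
    · -- compatible
      obtain ⟨e, hm, hb⟩ := E
      intro i h
      simp only [Equiv.symm_apply_apply]
      have hle : i ≤ (⟨(i : ℕ) + 1, h⟩ : Fin n) := by rw [Fin.le_def]; simp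
      have h1 := hm hle
      have h2 := csum_succ' π i h
      constructor
      · have h3 := csum_mono π hle
        omega
      · intro hdes
        have hmem : i ∈ descSet π := (mem_descSet π i).mpr ⟨h, hdes⟩
        rw [h2, if_pos hmem]
        omega
    · -- bounded by k
      obtain ⟨e, hm, hb⟩ := E
      intro x
      have h1 := hb (π.symm x)
      have h2 := csum_le π (π.symm x)
      simp only
      omega
    · -- left inverse
      rintro ⟨f, hc, hb⟩
      apply Subtype.ext
      funext x
      simp only [Equiv.symm_apply_apply, Equiv.apply_symm_apply]
      have h2 := (key f hc hb).1 (π.symm x)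
      rw [Equiv.apply_symm_apply] at h2
      omega
    · -- right inverse
      rintro ⟨e, hm, hb⟩
      apply Subtype.ext
      funext i
      simp only [Equiv.symm_apply_apply]
      omega
  · rw [if_neg hdk]
    have : IsEmpty {f : Fin n → ℕ // PiCompatible π f ∧ ∀ x, f x ≤ k} := by
      constructor
      rintro ⟨f, hc, hb⟩
      have h1 := (key f hc hb).1 ⟨0, hn⟩
      have h2 := (key f hc hb).2 ⟨0, hn⟩
      rw [csum_zero π hn] at h1 h2
      omega
    exact Nat.card_of_isEmpty

section Decomp

variable {n : ℕ} (P : PartialOrder (Fin n))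

lemma finite_bounded {n k : ℕ} (p : (Fin n → ℕ) → Prop) :
    Finite {f : Fin n → ℕ // p f ∧ ∀ x, f x ≤ k} := by
  apply Finite.of_injective
    (fun f => (fun x => (⟨f.1 x, Nat.lt_succ_of_le (f.2.2 x)⟩ : Fin (k + 1)) : Fin n → Fin (k + 1)))
  intro a b hab
  apply Subtype.ext
  funext x
  have := congrFun hab x
  simpa [Fin.mk.injEq] using this

lemma sort_linExt {f : Fin n → ℕ} (hpp : IsPPartition P f) :
    IsLinearExtension P (Tuple.sort f) := by
  intro i j hij
  set σ := Tuple.sort f with hσ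
  obtain ⟨hmono, htie⟩ := (Tuple.eq_sort_iff (f := f) (σ := σ)).mp hσ
  have hne : i ≠ j := by
    intro he
    subst he
    exact absurd hij (@lt_irrefl (Fin n) P.toPreorder i)
  have hai : σ (σ.symm i) = i := σ.apply_symm_apply i
  have haj : σ (σ.symm j) = j := σ.apply_symm_apply j
  obtain ⟨h1, h2⟩ := hpp i j hij
  clear hij
  rcases lt_trichotomy (σ.symm i) (σ.symm j) with h | h | h
  · exact h
  · exact absurd (σ.symm.injective h) hne
  · exfalso
    have hji : f j ≤ f i := by
      have hh : σ.symm j ≤ σ.symm i := by rw [Fin.le_def]; exact Nat.le_of_lt h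
      have := hmono hh
      simpa [hai, haj] using this
    rcases lt_trichotomy i j with hij' | hij' | hij'
    · have hfe : f i = f j := le_antisymm (h1 hij') hji
      have := htie _ _ h (by rw [hai, haj, hfe])
      rw [hai, haj] at this
      have t1 : (j : ℕ) < i := this
      have t2 : (i : ℕ) < j := hij'
      exact absurd t2 (Nat.lt_asymm t1)
    · exact hne hij'
    · exact absurd hji (not_le.mpr (h2 hij'))

lemma pp_of_compat {π : Equiv.Perm (Fin n)} {f : Fin n → ℕ}
    (hle : IsLinearExtension P π) (hcp : PiCompatible π f) : IsPPartition P f := by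
  intro i j hij
  have hab : π.symm i < π.symm j := hle i j hij
  clear hij
  have hT := T_strictMono hcp hab
  replace hT : f (π (π.symm i)) * n + (π (π.symm i) : ℕ) <
    f (π (π.symm j)) * n + (π (π.symm j) : ℕ) := hT
  rw [π.apply_symm_apply, π.apply_symm_apply] at hT
  have hi : (i : ℕ) < n := i.isLt
  have hj : (j : ℕ) < n := j.isLt
  have hfle : f i ≤ f j := by nlinarith [hT, hi, hj]
  constructor
  · intro _; exact hfle
  · intro hji
    rcases lt_or_eq_of_le hfle with h | h
    · exact h
    · exfalso
      rw [h] at hT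
      have t1 : (i : ℕ) < (j : ℕ) := Nat.lt_of_add_lt_add_left hT
      have t2 : (j : ℕ) < (i : ℕ) := hji
      exact absurd t2 (Nat.lt_asymm t1)

open scoped Classical in
lemma orderPoly_eq_sum (k : ℕ) :
    orderPoly P k = ∑ π : Equiv.Perm (Fin n),
      (if IsLinearExtension P π then
        Nat.card {f : Fin n → ℕ // PiCompatible π f ∧ ∀ x, f x ≤ k} else 0) := by
  classical
  have E : {f : Fin n → ℕ // IsPPartition P f ∧ ∀ x, f x ≤ k} ≃
      Σ π : Equiv.Perm (Fin n),
        {f : Fin n → ℕ // (IsLinearExtension P π ∧ PiCompatible π f) ∧ ∀ x, f x ≤ k} := by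
    refine ⟨fun F => ⟨Tuple.sort F.1, ⟨F.1, ⟨⟨sort_linExt P F.2.1, compat_sort _⟩, F.2.2⟩⟩⟩,
      fun G => ⟨G.2.1, pp_of_compat P G.2.2.1.1 G.2.2.1.2, G.2.2.2⟩, ?_, ?_⟩
    · rintro ⟨f, hf⟩
      rfl
    · rintro ⟨π, f, ⟨⟨hl, hc⟩, hb⟩⟩
      have hπ : Tuple.sort f = π := ((compat_iff_sort π f).mp hc).symm
      subst hπ
      rfl
  rw [orderPoly, Nat.card_congr E]
  letI : ∀ π : Equiv.Perm (Fin n),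
      Fintype {f : Fin n → ℕ // (IsLinearExtension P π ∧ PiCompatible π f) ∧ ∀ x, f x ≤ k} :=
    fun π => @Fintype.ofFinite _ (finite_bounded _)
  rw [Nat.card_eq_fintype_card, Fintype.card_sigma]
  apply Finset.sum_congr rfl
  intro π _
  by_cases h : IsLinearExtension P π
  · rw [if_pos h, ← Nat.card_eq_fintype_card]
    apply Nat.card_congr
    exact ⟨fun F => ⟨F.1, F.2.1.2, F.2.2⟩, fun F => ⟨F.1, ⟨h, F.2.1⟩, F.2.2⟩,
      fun F => rfl, fun F => rfl⟩
  · rw [if_neg h]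
    rw [Fintype.card_eq_zero_iff]
    constructor
    rintro ⟨f, ⟨⟨hl, -⟩, -⟩⟩
    exact h hl

end Decomp

lemma altInnerSum (N d k : ℕ) :
    ∑ i ∈ Finset.range (k + 1), (-1 : ℤ) ^ i * ((N + 1).choose i : ℤ) *
      (if d ≤ k - i then (((k - i) - d + N).choose N : ℤ) else 0)
      = if d = k then 1 else 0 := by
  by_cases hdk : d ≤ k
  · have hsub : Finset.range (k - d + 1) ⊆ Finset.range (k + 1) :=
      Finset.range_subset_range.mpr (by omega)
    rw [← Finset.sum_subset hsub (by
      intro i hi hni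
      rw [Finset.mem_range] at hi
      rw [Finset.mem_range, not_lt] at hni
      rw [if_neg (by omega), mul_zero])]
    have hcongr : ∀ i ∈ Finset.range (k - d + 1),
        (-1 : ℤ) ^ i * ((N + 1).choose i : ℤ) *
          (if d ≤ k - i then (((k - i) - d + N).choose N : ℤ) else 0)
        = (-1 : ℤ) ^ i * ((N + 1).choose i : ℤ) * ((N + ((k - d) - i)).choose N : ℤ) := by
      intro i hi
      rw [Finset.mem_range] at hi
      rw [if_pos (by omega)]
      have h2 : (k - i) - d + N = N + ((k - d) - i) := by omega
      rw [h2]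
    rw [Finset.sum_congr rfl hcongr, alt_sum_key]
    by_cases h : d = k
    · rw [if_pos (by omega), if_pos h]
    · rw [if_neg (by omega), if_neg h]
  · rw [if_neg (by omega)]
    apply Finset.sum_eq_zero
    intro i hi
    rw [Finset.mem_range] at hi
    rw [if_neg (by omega), mul_zero]

theorem pEulerian_eq_alternating_sum (n : ℕ) (hn : 1 ≤ n) (P : PartialOrder (Fin n)) (k : ℕ) :
    (Nat.card {π : Equiv.Perm (Fin n) //
        IsLinearExtension P π ∧ descentCount π = k} : ℤ) =
      ∑ i ∈ Finset.range (k + 1),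
        (-1 : ℤ) ^ i * ((n + 1).choose i : ℤ) * (orderPoly P (k - i) : ℤ) := by
  classical
  have hL : (Nat.card {π : Equiv.Perm (Fin n) //
      IsLinearExtension P π ∧ descentCount π = k} : ℤ)
      = ∑ π : Equiv.Perm (Fin n), (if IsLinearExtension P π then
          (if (descSet π).card = k then (1 : ℤ) else 0) else 0) := by
    rw [Nat.card_eq_fintype_card, Fintype.card_subtype, Finset.natCast_card_filter]
    apply Finset.sum_congr rfl
    intro π _
    rw [descentCount_eq]
    by_cases h1 : IsLinearExtension P π <;> by_cases h2 : (descSet π).card = k <;>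
      simp [h1, h2]
  have hR : ∀ i : ℕ, (orderPoly P (k - i) : ℤ) = ∑ π : Equiv.Perm (Fin n),
      (if IsLinearExtension P π then
        (if (descSet π).card ≤ k - i then
          (((k - i) - (descSet π).card + n).choose n : ℤ) else 0) else 0) := by
    intro i
    rw [orderPoly_eq_sum P (k - i)]
    push_cast
    apply Finset.sum_congr rfl
    intro π _
    rw [card_compat hn π (k - i)]
    by_cases h1 : IsLinearExtension P π <;> by_cases h2 : (descSet π).card ≤ k - i <;>
      simp [h1, h2]
  have main : ∑ i ∈ Finset.range (k + 1),
      (-1 : ℤ) ^ i * ((n + 1).choose i : ℤ) * (orderPoly P (k - i) : ℤ)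
      = ∑ π : Equiv.Perm (Fin n), (if IsLinearExtension P π then
          (if (descSet π).card = k then (1 : ℤ) else 0) else 0) := by
    have step1 : ∑ i ∈ Finset.range (k + 1),
        (-1 : ℤ) ^ i * ((n + 1).choose i : ℤ) * (orderPoly P (k - i) : ℤ)
        = ∑ i ∈ Finset.range (k + 1), ∑ π : Equiv.Perm (Fin n),
            (-1 : ℤ) ^ i * ((n + 1).choose i : ℤ) *
              (if IsLinearExtension P π then
                (if (descSet π).card ≤ k - i then
                  (((k - i) - (descSet π).card + n).choose n : ℤ) else 0) else 0) := by
      apply Finset.sum_congr rfl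
      intro i _
      rw [hR i, Finset.mul_sum]
    rw [step1, Finset.sum_comm]
    apply Finset.sum_congr rfl
    intro π _
    by_cases h1 : IsLinearExtension P π
    · simp only [if_pos h1]
      exact altInnerSum n (descSet π).card k
    · simp only [if_neg h1, mul_zero]
      exact Finset.sum_eq_zero fun i _ => rfl
  rw [hL, main]
end

section
/- (Fundamental lemma of P-partitions) Let P be a partial order ≺ on {1,…,n}. For every P-partition f : {1,…,n} → ℕ there exists a unique linear extension π of P such that f is π-compatible, i.e., f(π(1)) ≤ f(π(2)) ≤ ⋯ ≤ f(π(n)) and f(π(i)) < f(π(i+1)) whenever π(i) > π(i+1). -/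
/-- The lexicographic key comparison. -/
lemma key_lt_iff {n : ℕ} (f : Fin n → ℕ) (a b : Fin n) :
    f a * n + (a : ℕ) < f b * n + (b : ℕ) ↔
      f a < f b ∨ (f a = f b ∧ a < b) := by
  have ha := a.isLt; have hb := b.isLt
  rw [Fin.lt_def]
  rcases lt_trichotomy (f a) (f b) with h | h | h
  · constructor
    · intro _; exact Or.inl h
    · intro _; nlinarith
  · rw [h]; omega
  · constructor
    · intro hk; exfalso; nlinarith
    · rintro (h' | ⟨h', _⟩) <;> omega

/-- A function on `Fin n` increasing at consecutive indices is strictly monotone. -/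
lemma strictMono_of_succ_lt {n : ℕ} {g : Fin n → ℕ}
    (h : ∀ (i : Fin n) (hi : (i : ℕ) + 1 < n), g i < g ⟨(i : ℕ) + 1, hi⟩) :
    StrictMono g := by
  intro a b hab
  obtain ⟨b, hb⟩ := b
  induction b with
  | zero => exact absurd hab (by simp [Fin.lt_def])
  | succ m ih =>
    have hm : m < n := by omega
    have hstep : g ⟨m, hm⟩ < g ⟨m + 1, hb⟩ := h ⟨m, hm⟩ hb
    rcases lt_or_eq_of_le (Nat.lt_succ_iff.mp hab) with h' | h'
    · exact lt_trans (ih hm h') hstep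
    · have : a = ⟨m, hm⟩ := Fin.ext h'
      rw [this]; exact hstep

lemma compat_iff_strictMono {n : ℕ} (f : Fin n → ℕ) (σ : Equiv.Perm (Fin n)) :
    PiCompatible σ f ↔ StrictMono (fun x => f (σ x) * n + ((σ x : Fin n) : ℕ)) := by
  constructor
  · intro hc
    apply strictMono_of_succ_lt
    intro i hi
    rw [key_lt_iff]
    obtain ⟨hle, hstrict⟩ := hc i hi
    rcases lt_or_eq_of_le hle with h | h
    · exact Or.inl h
    · right
      refine ⟨h, ?_⟩
      rcases lt_trichotomy (σ i) (σ ⟨(i : ℕ) + 1, hi⟩) with h' | h' | h'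
      · exact h'
      · exact absurd (σ.injective h') (by simp [Fin.ext_iff])
      · exact absurd (hstrict h') (by omega)
  · intro hs i hi
    have := hs (show i < ⟨(i : ℕ) + 1, hi⟩ by simp [Fin.lt_def])
    rw [key_lt_iff] at this
    rcases this with h | ⟨h, h'⟩
    · exact ⟨le_of_lt h, fun _ => h⟩
    · exact ⟨le_of_eq h, fun hlt => absurd h' (asymm hlt)⟩


lemma key_injective {n : ℕ} (f : Fin n → ℕ) :
    Function.Injective (fun x : Fin n => f x * n + (x : ℕ)) := by
  intro a b hab
  simp only at hab
  have ha := a.isLt; have hb := b.isLt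
  have : (a : ℕ) = (b : ℕ) := by
    rcases Nat.lt_trichotomy (f a) (f b) with h | h | h
    · nlinarith
    · rw [h] at hab; omega
    · nlinarith
  exact Fin.ext this

lemma exists_unique_compatible {n : ℕ} (f : Fin n → ℕ) :
    ∃ π : Equiv.Perm (Fin n), PiCompatible π f ∧
      (∀ i j : Fin n, f i * n + (i : ℕ) < f j * n + (j : ℕ) → π.symm i < π.symm j) ∧
      ∀ σ : Equiv.Perm (Fin n), PiCompatible σ f → σ = π := by
  set k : Fin n → ℕ := fun x => f x * n + (x : ℕ) with hk
  have kinj : Function.Injective k := key_injective f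
  set π : Equiv.Perm (Fin n) := Tuple.sort k with hπ
  have hmono : Monotone (k ∘ π) := Tuple.monotone_sort k
  have hks : StrictMono (k ∘ π) :=
    hmono.strictMono_of_injective (kinj.comp π.injective)
  refine ⟨π, (compat_iff_strictMono f π).mpr hks, ?_, ?_⟩
  · intro i j hij
    have h1 : (k ∘ π) (π.symm i) < (k ∘ π) (π.symm j) := by
      simpa using hij
    exact hks.lt_iff_lt.mp h1
  · intro σ hcompat
    have hσs : StrictMono (k ∘ σ) := (compat_iff_strictMono f σ).mp hcompat
    have hrange : Set.range (k ∘ σ) = Set.range (k ∘ π) := by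
      rw [Set.range_comp, Set.range_comp, Equiv.range_eq_univ, Equiv.range_eq_univ]
    have heq : k ∘ σ = k ∘ π := (@StrictMono.range_inj (Fin n) ℕ Fin.instLinearOrder Nat.instPreorder (inferInstance : WellFoundedLT (Fin n)) _ _ hσs hks).mp hrange
    exact Equiv.ext fun x => kinj (congrFun heq x)

/-- The fundamental lemma of P-partitions. -/
theorem pPartition_unique_linear_extension (n : ℕ) (P : PartialOrder (Fin n))
    (f : Fin n → ℕ) (hf : IsPPartition P f) :
    ∃! π : Equiv.Perm (Fin n), IsLinearExtension P π ∧ PiCompatible π f := by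
  obtain ⟨π, hcompat, hlt, huniq⟩ := exists_unique_compatible f
  have hkey : ∀ i j : Fin n, P.lt i j → f i * n + (i : ℕ) < f j * n + (j : ℕ) := by
    intro i j hij
    obtain ⟨h1, h2⟩ := hf i j hij
    rw [key_lt_iff]
    rcases lt_trichotomy i j with h | h | h
    · rcases lt_or_eq_of_le (h1 h) with h' | h'
      · exact Or.inl h'
      · exact Or.inr ⟨h', h⟩
    · exact absurd hij (h ▸ @lt_irrefl (Fin n) P.toPreorder i)
    · exact Or.inl (h2 h)
  exact ⟨π, ⟨fun i j hij => hlt i j (hkey i j hij), hcompat⟩,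
    fun σ ⟨_, hc⟩ => huniq σ hc⟩
end

section
/- Let α be a type, let d ≥ 0 be an integer, let 𝓕 be a finite set of finite subsets of α each of cardinality d, and for each F ∈ 𝓕 let r(F) be a subset of F. Suppose that the intervals I_F = {G : r(F) ⊆ G ⊆ F} for F ∈ 𝓕 are pairwise disjoint, and let K = ⋃_{F ∈ 𝓕} I_F. For i ≥ 0 let f_i denote the number of sets G ∈ K with |G| = i. Then for every integer k with 0 ≤ k ≤ d, Σ_{i=0}^{k} (−1)^{k−i} · C(d−i, k−i) · f_i = |{F ∈ 𝓕 : |r(F)| = k}|, where C(a,b) denotes the binomial coefficient. -/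
open Finset

/-- Number of sets of cardinality `i` in the boolean interval `[s, F]`. -/
lemma count_interval {α : Type*} [DecidableEq α] {s F : Finset α} (hs : s ⊆ F) (i : ℕ) :
    ((Finset.Icc s F).filter (fun G => G.card = i)).card =
      if s.card ≤ i then (F.card - s.card).choose (i - s.card) else 0 := by
  split_ifs with h
  · rw [← Finset.card_sdiff_of_subset hs, ← Finset.card_powersetCard (i - s.card) (F \ s)]
    apply Finset.card_bij (fun G _ => G \ s)
    · intro G hG
      simp only [mem_filter, Finset.mem_Icc] at hG
      obtain ⟨⟨h1, h2⟩, h3⟩ := hG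
      simp only [Finset.mem_powersetCard]
      exact ⟨Finset.sdiff_subset_sdiff h2 (le_refl s), by rw [Finset.card_sdiff_of_subset h1, h3]⟩
    · intro G hG G' hG' hEq
      simp only [mem_filter, Finset.mem_Icc] at hG hG'
      have : G \ s ∪ s = G' \ s ∪ s := by rw [hEq]
      rwa [Finset.sdiff_union_of_subset hG.1.1, Finset.sdiff_union_of_subset hG'.1.1] at this
    · intro H hH
      simp only [Finset.mem_powersetCard] at hH
      refine ⟨H ∪ s, ?_, ?_⟩
      · simp only [mem_filter, Finset.mem_Icc]
        have hdisj : Disjoint H s := Finset.disjoint_of_subset_left hH.1 sdiff_disjoint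
        refine ⟨⟨Finset.subset_union_right, Finset.union_subset
          (hH.1.trans (Finset.sdiff_subset)) hs⟩, ?_⟩
        rw [Finset.card_union_of_disjoint hdisj, hH.2, Nat.sub_add_cancel h]
      · have hdisj : Disjoint H s := Finset.disjoint_of_subset_left hH.1 sdiff_disjoint
        rw [Finset.union_sdiff_right, Finset.sdiff_eq_self_of_disjoint hdisj]
  · rw [Finset.card_eq_zero, Finset.filter_eq_empty_iff]
    intro G hG
    simp only [Finset.mem_Icc] at hG
    intro hc
    exact h (hc ▸ Finset.card_le_card hG.1)

/-- The key combinatorial identity. -/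
lemma key_identity {d k m : ℕ} (hk : k ≤ d) (hm : m ≤ d) :
    (∑ i ∈ Finset.range (k + 1),
      (-1 : ℤ) ^ (k - i) * ((d - i).choose (k - i) : ℤ) *
        (if m ≤ i then ((d - m).choose (i - m) : ℤ) else 0)) =
      if m = k then 1 else 0 := by
  by_cases hmk : m ≤ k
  · -- restrict the sum to i ∈ [m, k]
    have hsub : Finset.Ico m (k + 1) ⊆ Finset.range (k + 1) := by
      intro x hx; rw [Finset.mem_Ico] at hx; rw [Finset.mem_range]; omega
    rw [← Finset.sum_subset hsub]
    · rw [Finset.sum_Ico_eq_sum_range]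
      have hsum : ∀ j ∈ Finset.range (k + 1 - m),
          (-1 : ℤ) ^ (k - (m + j)) * ((d - (m + j)).choose (k - (m + j)) : ℤ) *
            (if m ≤ m + j then ((d - m).choose (m + j - m) : ℤ) else 0) =
          (-1 : ℤ) ^ (k - m) * ((d - m).choose (k - m) : ℤ) *
            ((-1 : ℤ) ^ j * ((k - m).choose j : ℤ)) := by
        intro j hj
        rw [Finset.mem_range] at hj
        have hjkm : j ≤ k - m := by omega
        rw [if_pos (Nat.le_add_right m j), Nat.add_sub_cancel_left]
        have h1 : k - (m + j) = (k - m) - j := by omega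
        have h2 : d - (m + j) = (d - m) - j := by omega
        rw [h1, h2]
        have hcm : ((d - m).choose (k - m) * (k - m).choose j : ℤ) =
            ((d - m).choose j * ((d - m) - j).choose ((k - m) - j) : ℤ) := by
          exact_mod_cast congrArg Nat.cast (Nat.choose_mul hjkm)
        have hsign : (-1 : ℤ) ^ ((k - m) - j) = (-1 : ℤ) ^ (k - m) * (-1 : ℤ) ^ j := by
          rw [← pow_add]
          have h3 : (k - m) + j = ((k - m) - j) + 2 * j := by omega
          rw [h3, pow_add, pow_mul]
          simp
        rw [hsign]
        linear_combination (-((-1 : ℤ) ^ (k - m) * (-1 : ℤ) ^ j)) * hcm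
      rw [Finset.sum_congr rfl hsum, ← Finset.mul_sum]
      have hrange : k + 1 - m = (k - m) + 1 := by omega
      rw [hrange]
      have : (∑ j ∈ Finset.range ((k - m) + 1), (-1 : ℤ) ^ j * ((k - m).choose j : ℤ)) =
          if (k - m) = 0 then 1 else 0 := Int.alternating_sum_range_choose
      rw [this]
      by_cases hmk' : m = k
      · simp [hmk']
      · have : k - m ≠ 0 := by omega
        simp [this, hmk']
    · intro i hi hni
      rw [Finset.mem_range] at hi
      rw [Finset.mem_Ico] at hni
      have : ¬ m ≤ i := by omega
      simp [this]
  · -- m > k : every term vanishes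
    have : ∀ i ∈ Finset.range (k + 1),
        (-1 : ℤ) ^ (k - i) * ((d - i).choose (k - i) : ℤ) *
          (if m ≤ i then ((d - m).choose (i - m) : ℤ) else 0) = 0 := by
      intro i hi
      rw [Finset.mem_range] at hi
      have : ¬ m ≤ i := by omega
      simp [this]
    rw [Finset.sum_congr rfl this]
    simp
    omega

/-- The `h`-vector identity for a pure partitionable simplicial complex:
the faces `K` are partitioned into boolean intervals `[r F, F]`, one for each
facet `F ∈ 𝓕`, all facets having `d` vertices; then the alternating sum of the
face numbers `f_i` equals the number of facets whose interval bottom has `k`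
elements. -/
theorem h_vector_of_partitionable {α : Type*} (d : ℕ) (𝓕 : Finset (Finset α))
    (hd : ∀ F ∈ 𝓕, F.card = d) (r : Finset α → Finset α) (hr : ∀ F ∈ 𝓕, r F ⊆ F)
    (hdisj : ∀ F ∈ 𝓕, ∀ F' ∈ 𝓕, F ≠ F' →
      ∀ G : Finset α, ¬((r F ⊆ G ∧ G ⊆ F) ∧ (r F' ⊆ G ∧ G ⊆ F')))
    (k : ℕ) (hk : k ≤ d) :
    (∑ i ∈ Finset.range (k + 1),
        (-1 : ℤ) ^ (k - i) * ((d - i).choose (k - i) : ℤ) *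
          (Nat.card {G : Finset α // (∃ F ∈ 𝓕, r F ⊆ G ∧ G ⊆ F) ∧ G.card = i} : ℤ)) =
      (Nat.card {F : Finset α // F ∈ 𝓕 ∧ (r F).card = k} : ℤ) := by
  classical
  have hNat : ∀ i : ℕ, (Nat.card {G : Finset α // (∃ F ∈ 𝓕, r F ⊆ G ∧ G ⊆ F) ∧ G.card = i}) =
      ((𝓕.biUnion (fun F => Finset.Icc (r F) F)).filter (fun G => G.card = i)).card := by
    intro i
    rw [← Nat.card_eq_finsetCard]
    apply Nat.card_congr
    apply Equiv.subtypeEquivRight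
    intro G
    simp [Finset.mem_Icc]
  have hNatR : (Nat.card {F : Finset α // F ∈ 𝓕 ∧ (r F).card = k}) =
      (𝓕.filter (fun F => (r F).card = k)).card := by
    rw [← Nat.card_eq_finsetCard]
    apply Nat.card_congr
    apply Equiv.subtypeEquivRight
    intro F
    simp
  have hf : ∀ i : ℕ,
      ((𝓕.biUnion (fun F => Finset.Icc (r F) F)).filter (fun G => G.card = i)).card =
      ∑ F ∈ 𝓕, (if (r F).card ≤ i then (d - (r F).card).choose (i - (r F).card) else 0) := by
    intro i
    rw [Finset.filter_biUnion, Finset.card_biUnion]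
    · refine Finset.sum_congr rfl (fun F hF => ?_)
      rw [count_interval (hr F hF) i, hd F hF]
    · intro F hF F' hF' hne
      rw [Function.onFun, Finset.disjoint_left]
      intro G hG hG'
      simp only [Finset.mem_filter, Finset.mem_Icc] at hG hG'
      exact hdisj F hF F' hF' hne G ⟨⟨hG.1.1, hG.1.2⟩, hG'.1.1, hG'.1.2⟩
  calc (∑ i ∈ Finset.range (k + 1),
        (-1 : ℤ) ^ (k - i) * ((d - i).choose (k - i) : ℤ) *
          (Nat.card {G : Finset α // (∃ F ∈ 𝓕, r F ⊆ G ∧ G ⊆ F) ∧ G.card = i} : ℤ))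
      = ∑ i ∈ Finset.range (k + 1), ∑ F ∈ 𝓕,
          (-1 : ℤ) ^ (k - i) * ((d - i).choose (k - i) : ℤ) *
            (if (r F).card ≤ i then ((d - (r F).card).choose (i - (r F).card) : ℤ) else 0) := by
        refine Finset.sum_congr rfl (fun i _ => ?_)
        rw [hNat i, hf i]
        push_cast [Finset.mul_sum, apply_ite (Nat.cast : ℕ → ℤ)]
        rfl
    _ = ∑ F ∈ 𝓕, ∑ i ∈ Finset.range (k + 1),
          (-1 : ℤ) ^ (k - i) * ((d - i).choose (k - i) : ℤ) *
            (if (r F).card ≤ i then ((d - (r F).card).choose (i - (r F).card) : ℤ) else 0) :=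
        Finset.sum_comm
    _ = ∑ F ∈ 𝓕, (if (r F).card = k then (1 : ℤ) else 0) := by
        refine Finset.sum_congr rfl (fun F hF => ?_)
        exact key_identity hk ((hd F hF) ▸ Finset.card_le_card (hr F hF))
    _ = ((𝓕.filter (fun F => (r F).card = k)).card : ℤ) := by
        rw [Finset.card_filter]
        push_cast [apply_ite (Nat.cast : ℕ → ℤ)]
        rfl
    _ = (Nat.card {F : Finset α // F ∈ 𝓕 ∧ (r F).card = k} : ℤ) := by rw [hNatR]
end

section
/- For every integer k ≥ 0, the number N of 5-tuples (a_1, a_2, a_3, a_4, a_5) of natural numbers satisfying a_1 ≤ a_2 ≤ a_5, a_1 ≤ a_4 < a_3, and a_j ≤ k for all j, satisfies 40 · N = k(k+1)(k+2)(k+3)(2k+3). -/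
open Finset

lemma ind_le_sum (n a : ℕ) : (∑ x ∈ range n, if a ≤ x then (1:ℕ) else 0) = n - a := by
  induction n with
  | zero => simp
  | succ n ih =>
    rw [sum_range_succ, ih]
    by_cases h : a ≤ n <;> simp [h] <;> omega

lemma pairs_le (n a : ℕ) :
    2 * (∑ x ∈ range n, ∑ y ∈ range n, if a ≤ x ∧ x ≤ y then (1:ℕ) else 0)
      = (n - a) * (n - a + 1) := by
  induction n with
  | zero => simp
  | succ n ih =>
    simp_rw [sum_range_succ]
    rw [sum_add_distrib]
    have h1 : (∑ x ∈ range n, if a ≤ x ∧ x ≤ n then (1:ℕ) else 0) = n - a := by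
      rw [← ind_le_sum n a]
      refine sum_congr rfl fun x hx => ?_
      have := mem_range.mp hx
      by_cases h : a ≤ x <;> simp [h] <;> omega
    have h2 : (∑ y ∈ range n, if a ≤ n ∧ n ≤ y then (1:ℕ) else 0) = 0 := by
      refine sum_eq_zero fun y hy => ?_
      have := mem_range.mp hy
      simp; omega
    rw [h1, h2]
    rcases Nat.le_total a n with h | h
    · obtain ⟨m, rfl⟩ := Nat.exists_eq_add_of_le h
      have e1 : a + m - a = m := by omega
      have e2 : a + m + 1 - a = m + 1 := by omega
      have e3 : (if a ≤ a + m ∧ a + m ≤ a + m then (1:ℕ) else 0) = 1 := by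
        simp
      rw [e1] at ih
      rw [e2]
      ring_nf at ih ⊢
      omega
    · have hn : n - a = 0 := by omega
      have hs : (∑ x ∈ range n, ∑ y ∈ range n, if a ≤ x ∧ x ≤ y then (1:ℕ) else 0) = 0 := by
        refine sum_eq_zero fun x hx => sum_eq_zero fun y hy => ?_
        have := mem_range.mp hx
        simp; omega
      rw [hs, hn]
      by_cases hc : a ≤ n
      · have : a = n := le_antisymm hc h
        subst this
        simp
      · have h0 : n + 1 - a = 0 := by omega
        have h4 : (if a ≤ n ∧ n ≤ n then (1:ℕ) else 0) = 0 := by simp [hc]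
        rw [h4, h0]
        simp

lemma pairs_lt (n a : ℕ) :
    2 * (∑ x ∈ range n, ∑ y ∈ range n, if a ≤ x ∧ x < y then (1:ℕ) else 0)
      = (n - a) * (n - (a + 1)) := by
  induction n with
  | zero => simp
  | succ n ih =>
    simp_rw [sum_range_succ]
    rw [sum_add_distrib]
    have h1 : (∑ x ∈ range n, if a ≤ x ∧ x < n then (1:ℕ) else 0) = n - a := by
      rw [← ind_le_sum n a]
      refine sum_congr rfl fun x hx => ?_
      have := mem_range.mp hx
      by_cases h : a ≤ x <;> simp [h] <;> omega
    have h2 : (∑ y ∈ range n, if a ≤ n ∧ n < y then (1:ℕ) else 0) = 0 := by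
      refine sum_eq_zero fun y hy => ?_
      have := mem_range.mp hy
      simp; omega
    have h3 : (if a ≤ n ∧ n < n then (1:ℕ) else 0) = 0 := by simp
    rw [h1, h2, h3]
    rcases Nat.le_total a n with h | h
    · obtain ⟨m, rfl⟩ := Nat.exists_eq_add_of_le h
      have e1 : a + m - a = m := by omega
      have e2 : a + m + 1 - a = m + 1 := by omega
      have e3 : a + m - (a + 1) = m - 1 := by omega
      have e4 : a + m + 1 - (a + 1) = m := by omega
      rw [e1, e3] at ih
      rw [e1, e2, e4]
      rcases Nat.eq_zero_or_pos m with rfl | hm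
      · omega
      · obtain ⟨p, rfl⟩ : ∃ p, m = p + 1 := ⟨m - 1, by omega⟩
        have hp : p + 1 - 1 = p := rfl
        rw [hp] at ih
        ring_nf at ih ⊢
        omega
    · have hn : n - a = 0 := by omega
      have hs : (∑ x ∈ range n, ∑ y ∈ range n, if a ≤ x ∧ x < y then (1:ℕ) else 0) = 0 := by
        refine sum_eq_zero fun x hx => sum_eq_zero fun y hy => ?_
        have := mem_range.mp hx
        have := mem_range.mp hy
        simp; omega
      rw [hs, hn]
      have h0 : n + 1 - (a + 1) = 0 := by omega
      rw [h0]
      simp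

lemma final_sum (k : ℕ) :
    10 * ∑ j ∈ range (k + 1), ((j + 1) * (j + 1 + 1)) * ((j + 1) * j)
      = k * (k + 1) * (k + 2) * (k + 3) * (2 * k + 3) := by
  induction k with
  | zero => simp
  | succ k ih =>
    rw [sum_range_succ, mul_add, ih]
    ring

lemma ind_mul (p q : Prop) [Decidable p] [Decidable q] :
    (if p ∧ q then (1:ℕ) else 0) = (if p then 1 else 0) * (if q then 1 else 0) := by
  by_cases hp : p <;> by_cases hq : q <;> simp [hp, hq]

lemma reflect_sum (k : ℕ) :
    ∑ x ∈ range (k+1), ((k+1-x) * (k+1-x+1)) * ((k+1-x) * (k+1-(x+1)))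
      = ∑ j ∈ range (k + 1), ((j + 1) * (j + 1 + 1)) * ((j + 1) * j) := by
  have step1 : ∑ x ∈ range (k+1), ((k+1-x) * (k+1-x+1)) * ((k+1-x) * (k+1-(x+1)))
      = ∑ x ∈ range (k+1), ((k-x+1) * (k-x+1+1)) * ((k-x+1) * (k-x)) := by
    refine sum_congr rfl fun x hx => ?_
    have h := mem_range.mp hx
    have e1 : k + 1 - x = k - x + 1 := by omega
    have e3 : k + 1 - (x + 1) = k - x := by omega
    rw [e1, e3]
  rw [step1, ← Finset.sum_range_reflect (fun j => ((j + 1) * (j + 1 + 1)) * ((j + 1) * j)) (k+1)]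
  refine sum_congr rfl fun x hx => ?_
  have e : k + 1 - 1 - x = k - x := by omega
  rw [e]

/-- The number of `P`-partitions bounded by `k` of the poset on `{1,…,5}` with
cover relations `1 ≺ 2 ≺ 5` and `1 ≺ 4 ≺ 3`; tuples `(a 0, …, a 4)` here
correspond to `(a_1, …, a_5)`. -/
theorem card_bounded_pPartitions_example (k : ℕ) :
    40 * Nat.card {a : Fin 5 → ℕ //
        a 0 ≤ a 1 ∧ a 1 ≤ a 4 ∧ a 0 ≤ a 3 ∧ a 3 < a 2 ∧ ∀ j, a j ≤ k} =
      k * (k + 1) * (k + 2) * (k + 3) * (2 * k + 3) := by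
  have hcard : Nat.card {a : Fin 5 → ℕ //
        a 0 ≤ a 1 ∧ a 1 ≤ a 4 ∧ a 0 ≤ a 3 ∧ a 3 < a 2 ∧ ∀ j, a j ≤ k} =
      ((range (k+1) ×ˢ ((range (k+1) ×ˢ range (k+1)) ×ˢ (range (k+1) ×ˢ range (k+1)))).filter
        (fun p => (p.1 ≤ p.2.1.1 ∧ p.2.1.1 ≤ p.2.1.2) ∧ (p.1 ≤ p.2.2.1 ∧ p.2.2.1 < p.2.2.2))).card := by
    rw [← Nat.card_eq_finsetCard]
    exact Nat.card_congr
      { toFun := fun a => ⟨(a.1 0, ((a.1 1, a.1 4), (a.1 3, a.1 2))), by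
          obtain ⟨a, h1, h2, h3, h4, h5⟩ := a
          simp only [mem_filter, mem_product, mem_range]
          exact ⟨⟨Nat.lt_succ_of_le (h5 0), ⟨Nat.lt_succ_of_le (h5 1), Nat.lt_succ_of_le (h5 4)⟩,
            Nat.lt_succ_of_le (h5 3), Nat.lt_succ_of_le (h5 2)⟩, ⟨h1, h2⟩, h3, h4⟩⟩
        invFun := fun p => ⟨![p.1.1, p.1.2.1.1, p.1.2.2.2, p.1.2.2.1, p.1.2.1.2], by
          obtain ⟨⟨b0, ⟨b1, b4⟩, ⟨b3, b2⟩⟩, hp⟩ := p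
          simp only [mem_filter, mem_product, mem_range] at hp
          obtain ⟨⟨m0, ⟨m1, m4⟩, m3, m2⟩, ⟨c1, c2⟩, c3, c4⟩ := hp
          refine ⟨c1, c2, c3, c4, fun j => ?_⟩
          fin_cases j <;> simp <;> omega⟩
        left_inv := fun a => Subtype.ext (funext fun i => by fin_cases i <;> rfl)
        right_inv := fun p => rfl }
  rw [hcard, Finset.card_filter]
  rw [Finset.sum_product]
  calc 40 * ∑ x ∈ range (k+1), ∑ y ∈ (range (k+1) ×ˢ range (k+1)) ×ˢ (range (k+1) ×ˢ range (k+1)),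
        (if (x ≤ y.1.1 ∧ y.1.1 ≤ y.1.2) ∧ (x ≤ y.2.1 ∧ y.2.1 < y.2.2) then (1:ℕ) else 0)
      = 10 * ∑ x ∈ range (k+1),
          (2 * ∑ u ∈ range (k+1), ∑ v ∈ range (k+1), if x ≤ u ∧ u ≤ v then (1:ℕ) else 0) *
          (2 * ∑ u ∈ range (k+1), ∑ v ∈ range (k+1), if x ≤ u ∧ u < v then (1:ℕ) else 0) := by
        rw [Finset.mul_sum, Finset.mul_sum]
        refine sum_congr rfl fun x _ => ?_
        rw [Finset.sum_product]
        have hsplit : (∑ y1 ∈ range (k+1) ×ˢ range (k+1), ∑ y2 ∈ range (k+1) ×ˢ range (k+1),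
              if (x ≤ y1.1 ∧ y1.1 ≤ y1.2) ∧ (x ≤ y2.1 ∧ y2.1 < y2.2) then (1:ℕ) else 0)
            = (∑ y1 ∈ range (k+1) ×ˢ range (k+1), if x ≤ y1.1 ∧ y1.1 ≤ y1.2 then (1:ℕ) else 0) *
              (∑ y2 ∈ range (k+1) ×ˢ range (k+1), if x ≤ y2.1 ∧ y2.1 < y2.2 then (1:ℕ) else 0) := by
          rw [Finset.sum_mul_sum]
          exact sum_congr rfl fun p _ => sum_congr rfl fun q _ => ind_mul _ _
        rw [hsplit]
        simp only [Finset.sum_product]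
        ring
    _ = 10 * ∑ x ∈ range (k+1), ((k+1-x) * (k+1-x+1)) * ((k+1-x) * (k+1-(x+1))) := by
        congr 1
        exact sum_congr rfl fun x _ => by rw [pairs_le, pairs_lt]
    _ = 10 * ∑ j ∈ range (k + 1), ((j + 1) * (j + 1 + 1)) * ((j + 1) * j) := by
        rw [reflect_sum]
    _ = k * (k + 1) * (k + 2) * (k + 3) * (2 * k + 3) := final_sum k
end
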